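/- Let (Θ, Θ̄) be a twist for a weak Hopf algebra H over a field k and let x ∈ H be an invertible element with ε_t(x) = 1 and ε_s(x) = 1. Then the pair (Θˣ, Θ̄ˣ), where Θˣ = Δ(x⁻¹)Θ(x⊗x) and Θ̄ˣ = (x⁻¹⊗x⁻¹)Θ̄Δ(x), is also a twist for H; moreover the map h ↦ x⁻¹hx is an isomorphism of weak Hopf algebras from H_Θ to H_{Θˣ}, i.e. it is an algebra automorphism of H which intertwines the twisted comultiplications Δ_Θ(h)=Θ̄Δ(h)Θ and Δ_{Θˣ}(h)=Θ̄ˣΔ(h)Θˣ, preserves ε, and intertwines the twisted antipodes S_Θ(h)=v⁻¹S(h)v (v = S(Θ⁽¹⁾)Θ⁽²⁾) and S_{Θˣ}. -/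

import Mathlib

open TensorProduct

noncomputable section

namespace WHA

variable (k B : Type*) [Field k] [Ring B] [Algebra k B]

/-- `x ↦ x ⊗ 1`, the embedding of `B ⊗ B` into legs 1,2 of `B ⊗ B ⊗ B`. -/
def leg12 : B ⊗[k] B →ₗ[k] B ⊗[k] (B ⊗[k] B) :=
  (TensorProduct.assoc k B B B).toLinearMap ∘ₗ (TensorProduct.mk k (B ⊗[k] B) B).flip 1

/-- `x ↦ 1 ⊗ x`, the embedding of `B ⊗ B` into legs 2,3 of `B ⊗ B ⊗ B`. -/
def leg23 : B ⊗[k] B →ₗ[k] B ⊗[k] (B ⊗[k] B) :=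
  TensorProduct.mk k B (B ⊗[k] B) 1

/-- `a ⊗ b ↦ a ⊗ 1 ⊗ b`, the embedding of `B ⊗ B` into legs 1,3 of `B ⊗ B ⊗ B`. -/
def leg13 : B ⊗[k] B →ₗ[k] B ⊗[k] (B ⊗[k] B) :=
  TensorProduct.map LinearMap.id (TensorProduct.mk k B B 1)

/-- `Δ ⊗ id`, landing in the right-associated triple tensor product. -/
def ext12 (Δ : B →ₗ[k] B ⊗[k] B) : B ⊗[k] B →ₗ[k] B ⊗[k] (B ⊗[k] B) :=
  (TensorProduct.assoc k B B B).toLinearMap ∘ₗ TensorProduct.map Δ LinearMap.id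

/-- `id ⊗ Δ`. -/
def ext23 (Δ : B →ₗ[k] B ⊗[k] B) : B ⊗[k] B →ₗ[k] B ⊗[k] (B ⊗[k] B) :=
  TensorProduct.map LinearMap.id Δ

/-- `(ε ⊗ id)` composed with the canonical isomorphism `k ⊗ B ≅ B`. -/
def epsL (ε : B →ₗ[k] k) : B ⊗[k] B →ₗ[k] B :=
  (TensorProduct.lid k B).toLinearMap ∘ₗ TensorProduct.map ε LinearMap.id

/-- `(id ⊗ ε)` composed with the canonical isomorphism `B ⊗ k ≅ B`. -/
def epsR (ε : B →ₗ[k] k) : B ⊗[k] B →ₗ[k] B :=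
  (TensorProduct.rid k B).toLinearMap ∘ₗ TensorProduct.map LinearMap.id ε

/-- Pairing of two linear functionals against an element of `B ⊗ B`. -/
def pairF (φ ψ : B →ₗ[k] k) : B ⊗[k] B →ₗ[k] k :=
  (TensorProduct.lid k k).toLinearMap ∘ₗ TensorProduct.map φ ψ

/-- The multiplication map `B ⊗ B → B`. -/
def mul2 : B ⊗[k] B →ₗ[k] B := LinearMap.mul' k B

/-- A weak Hopf algebra structure on the `k`-algebra `B`. -/
structure WeakHopf where
  Δ : B →ₗ[k] B ⊗[k] B
  ε : B →ₗ[k] k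
  S : B →ₗ[k] B
  comul_mul : ∀ g h : B, Δ (g * h) = Δ g * Δ h
  coassoc : ∀ h : B, ext12 k B Δ (Δ h) = ext23 k B Δ (Δ h)
  counit_left : ∀ h : B, epsL k B ε (Δ h) = h
  counit_right : ∀ h : B, epsR k B ε (Δ h) = h
  eps_weak₁ : ∀ g h f : B, ε (g * h * f) =
    pairF k B (ε ∘ₗ LinearMap.mulLeft k g) (ε ∘ₗ LinearMap.mulRight k f) (Δ h)
  eps_weak₂ : ∀ g h f : B, ε (g * h * f) =
    pairF k B (ε ∘ₗ LinearMap.mulRight k f) (ε ∘ₗ LinearMap.mulLeft k g) (Δ h)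
  delta_one₁ : ext12 k B Δ (Δ 1) = leg12 k B (Δ 1) * leg23 k B (Δ 1)
  delta_one₂ : ext12 k B Δ (Δ 1) = leg23 k B (Δ 1) * leg12 k B (Δ 1)
  antipode₁ : ∀ h : B,
    mul2 k B (TensorProduct.map LinearMap.id S (Δ h)) = epsL k B ε (Δ 1 * (h ⊗ₜ[k] 1))
  antipode₂ : ∀ h : B,
    mul2 k B (TensorProduct.map S LinearMap.id (Δ h)) = epsR k B ε (((1 : B) ⊗ₜ[k] h) * Δ 1)
  antipode₃ : ∀ h : B,
    mul2 k B (TensorProduct.map S (mul2 k B ∘ₗ TensorProduct.map LinearMap.id S)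
      (ext23 k B Δ (Δ h))) = S h

variable {k B}

/-- The target counital map `ε_t`. -/
def WeakHopf.εt (W : WeakHopf k B) : B →ₗ[k] B :=
  epsL k B W.ε ∘ₗ LinearMap.mulLeft k (W.Δ 1) ∘ₗ (TensorProduct.mk k B B).flip 1

/-- The source counital map `ε_s`. -/
def WeakHopf.εs (W : WeakHopf k B) : B →ₗ[k] B :=
  epsR k B W.ε ∘ₗ LinearMap.mulRight k (W.Δ 1) ∘ₗ TensorProduct.mk k B B 1

variable (k B)

/-- A twist for a weak Hopf algebra. -/
structure Twist (W : WeakHopf k B) where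
  Θ : B ⊗[k] B
  Θbar : B ⊗[k] B
  idem_left : Θ = W.Δ 1 * Θ
  idem_right : Θbar = Θbar * W.Δ 1
  prod_eq : Θ * Θbar = W.Δ 1
  counit₁ : epsL k B W.ε Θ = 1
  counit₂ : epsR k B W.ε Θ = 1
  counit₃ : epsL k B W.ε Θbar = 1
  counit₄ : epsR k B W.ε Θbar = 1
  cocycle₁ : ext12 k B W.Δ Θ * leg12 k B Θ = ext23 k B W.Δ Θ * leg23 k B Θ
  cocycle₂ : leg12 k B Θbar * ext12 k B W.Δ Θbar = leg23 k B Θbar * ext23 k B W.Δ Θbar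
  cocycle₃ : ext12 k B W.Δ Θbar * ext23 k B W.Δ Θ = leg12 k B Θ * leg23 k B Θbar
  cocycle₄ : ext23 k B W.Δ Θbar * ext12 k B W.Δ Θ = leg23 k B Θ * leg12 k B Θbar

end WHA

namespace WHA

/-- Conjugation `h ↦ xi * h * x` as a linear map. -/
def conj (k : Type*) {B : Type*} [Field k] [Ring B] [Algebra k B] (xi x : B) : B →ₗ[k] B :=
  LinearMap.mulLeft k xi ∘ₗ LinearMap.mulRight k x

end WHA

set_option synthInstance.maxHeartbeats 1000000
set_option maxHeartbeats 1600000

namespace WHA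

variable {k B : Type*} [Field k] [Ring B] [Algebra k B]

/-! ### Basic computation lemmas -/

@[simp] lemma mul2_tmul (a b : B) : mul2 k B (a ⊗ₜ[k] b) = a * b := rfl

@[simp] lemma epsL_tmul (φ : B →ₗ[k] k) (a b : B) :
    epsL k B φ (a ⊗ₜ[k] b) = φ a • b := rfl

@[simp] lemma epsR_tmul (φ : B →ₗ[k] k) (a b : B) :
    epsR k B φ (a ⊗ₜ[k] b) = φ b • a := rfl

@[simp] lemma pairF_tmul (φ ψ : B →ₗ[k] k) (a b : B) :
    pairF k B φ ψ (a ⊗ₜ[k] b) = φ a * ψ b := by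
  simp [pairF, smul_eq_mul, mul_comm]

@[simp] lemma leg12_tmul (a b : B) :
    leg12 k B (a ⊗ₜ[k] b) = a ⊗ₜ[k] (b ⊗ₜ[k] (1:B)) := rfl

@[simp] lemma leg23_apply (u : B ⊗[k] B) :
    leg23 k B u = (1:B) ⊗ₜ[k] u := rfl

@[simp] lemma ext12_tmul (D : B →ₗ[k] B ⊗[k] B) (a b : B) :
    ext12 k B D (a ⊗ₜ[k] b) = (TensorProduct.assoc k B B B) (D a ⊗ₜ[k] b) := rfl

@[simp] lemma ext23_tmul (D : B →ₗ[k] B ⊗[k] B) (a b : B) :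
    ext23 k B D (a ⊗ₜ[k] b) = a ⊗ₜ[k] D b := by
  simp [ext23]

lemma one2 : (1 : B ⊗[k] B) = (1:B) ⊗ₜ[k] (1:B) := Algebra.TensorProduct.one_def

lemma one3 : (1 : B ⊗[k] (B ⊗[k] B)) = (1:B) ⊗ₜ[k] ((1:B) ⊗ₜ[k] (1:B)) := by
  rw [Algebra.TensorProduct.one_def, one2]

/-- The linear associator agrees with the algebra associator. -/
lemma assoc_eq_algebra (x : (B ⊗[k] B) ⊗[k] B) :
    (TensorProduct.assoc k B B B) x = (Algebra.TensorProduct.assoc k k k B B B) x := by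
  have h : (TensorProduct.assoc k B B B).toLinearMap
      = (Algebra.TensorProduct.assoc k k k B B B).toLinearMap := by
    apply TensorProduct.ext_threefold
    intro a b c
    simp
  exact congrFun (congrArg (fun f => (DFunLike.coe f : _ → _)) h) x

lemma assoc_mul (x y : (B ⊗[k] B) ⊗[k] B) :
    (TensorProduct.assoc k B B B) (x * y) =
      (TensorProduct.assoc k B B B) x * (TensorProduct.assoc k B B B) y := by
  rw [assoc_eq_algebra, assoc_eq_algebra, assoc_eq_algebra, map_mul]

lemma leg12_mul (u v : B ⊗[k] B) :
    leg12 k B (u * v) = leg12 k B u * leg12 k B v := by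
  have : ∀ w : B ⊗[k] B, leg12 k B w = (TensorProduct.assoc k B B B) (w ⊗ₜ[k] (1:B)) :=
    fun w => rfl
  rw [this, this, this, ← assoc_mul]
  congr 1
  rw [Algebra.TensorProduct.tmul_mul_tmul, one_mul]

lemma leg23_mul (u v : B ⊗[k] B) :
    leg23 k B (u * v) = leg23 k B u * leg23 k B v := by
  simp only [leg23_apply]
  rw [Algebra.TensorProduct.tmul_mul_tmul, one_mul]

lemma mapDid_mul (W : WeakHopf k B) (u v : B ⊗[k] B) :
    TensorProduct.map W.Δ LinearMap.id (u * v) =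
      TensorProduct.map W.Δ LinearMap.id u * TensorProduct.map W.Δ LinearMap.id v := by
  induction u using TensorProduct.induction_on with
  | zero => simp
  | tmul a b =>
    induction v using TensorProduct.induction_on with
    | zero => simp
    | tmul c d =>
      rw [Algebra.TensorProduct.tmul_mul_tmul]
      simp only [TensorProduct.map_tmul, LinearMap.id_coe, id_eq, W.comul_mul,
        Algebra.TensorProduct.tmul_mul_tmul]
    | add v w hv hw => rw [mul_add, map_add, hv, hw, map_add, mul_add]
  | add u u' hu hu' => rw [add_mul, map_add, hu, hu', map_add, add_mul]

lemma mapidD_mul (W : WeakHopf k B) (u v : B ⊗[k] B) :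
    TensorProduct.map LinearMap.id W.Δ (u * v) =
      TensorProduct.map LinearMap.id W.Δ u * TensorProduct.map LinearMap.id W.Δ v := by
  induction u using TensorProduct.induction_on with
  | zero => simp
  | tmul a b =>
    induction v using TensorProduct.induction_on with
    | zero => simp
    | tmul c d =>
      rw [Algebra.TensorProduct.tmul_mul_tmul]
      simp only [TensorProduct.map_tmul, LinearMap.id_coe, id_eq, W.comul_mul,
        Algebra.TensorProduct.tmul_mul_tmul]
    | add v w hv hw => rw [mul_add, map_add, hv, hw, map_add, mul_add]
  | add u u' hu hu' => rw [add_mul, map_add, hu, hu', map_add, add_mul]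

lemma ext12_mul (W : WeakHopf k B) (u v : B ⊗[k] B) :
    ext12 k B W.Δ (u * v) = ext12 k B W.Δ u * ext12 k B W.Δ v := by
  have : ∀ w, ext12 k B W.Δ w =
      (TensorProduct.assoc k B B B) (TensorProduct.map W.Δ LinearMap.id w) := fun w => rfl
  rw [this, this, this, mapDid_mul, assoc_mul]

lemma ext23_mul (W : WeakHopf k B) (u v : B ⊗[k] B) :
    ext23 k B W.Δ (u * v) = ext23 k B W.Δ u * ext23 k B W.Δ v := by
  have : ∀ w, ext23 k B W.Δ w = TensorProduct.map LinearMap.id W.Δ w := fun w => rfl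
  rw [this, this, this, mapidD_mul]

/-! ### Axiom repackaging -/

variable (W : WeakHopf k B)

lemma e_mul_delta (a : B) : W.Δ 1 * W.Δ a = W.Δ a := by
  rw [← W.comul_mul, one_mul]

lemma delta_mul_e (a : B) : W.Δ a * W.Δ 1 = W.Δ a := by
  rw [← W.comul_mul, mul_one]

lemma εt_apply (h : B) : W.εt h = epsL k B W.ε (W.Δ 1 * (h ⊗ₜ[k] (1:B))) := rfl

lemma εs_apply (h : B) : W.εs h = epsR k B W.ε (((1:B) ⊗ₜ[k] h) * W.Δ 1) := by
  simp [WeakHopf.εs, LinearMap.mulRight_apply]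

end WHA
namespace WHA

variable {k B : Type*} [Field k] [Ring B] [Algebra k B] (W : WeakHopf k B)

/-- "mid": apply ε to the middle leg of `B ⊗ (B ⊗ B)`. -/
noncomputable def mid (W : WeakHopf k B) : B ⊗[k] (B ⊗[k] B) →ₗ[k] B ⊗[k] B :=
  TensorProduct.map LinearMap.id (epsL k B W.ε)

@[simp] lemma mid_tmul (a : B) (u : B ⊗[k] B) :
    mid W (a ⊗ₜ[k] u) = a ⊗ₜ[k] (epsL k B W.ε u) := by simp [mid]

lemma mid_ext23 (u : B ⊗[k] B) : mid W (ext23 k B W.Δ u) = u := by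
  induction u using TensorProduct.induction_on with
  | zero => simp
  | tmul a b => simp [W.counit_left]
  | add u v hu hv => rw [map_add, map_add, hu, hv]

lemma mid_assoc_tmul (u : B ⊗[k] B) (d : B) :
    mid W ((TensorProduct.assoc k B B B) (u ⊗ₜ[k] d)) = (epsR k B W.ε u) ⊗ₜ[k] d := by
  induction u using TensorProduct.induction_on with
  | zero =>
    rw [TensorProduct.zero_tmul, LinearEquiv.map_zero, map_zero, map_zero,
      TensorProduct.zero_tmul]
  | tmul p q =>
    simp only [TensorProduct.assoc_tmul, mid_tmul, epsL_tmul, epsR_tmul]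
    rw [TensorProduct.tmul_smul, TensorProduct.smul_tmul']
  | add u v hu hv =>
    rw [TensorProduct.add_tmul, LinearEquiv.map_add, map_add, hu, hv, map_add,
      TensorProduct.add_tmul]

lemma mid_ext12 (u : B ⊗[k] B) : mid W (ext12 k B W.Δ u) = u := by
  induction u using TensorProduct.induction_on with
  | zero => simp
  | tmul a b => rw [ext12_tmul, mid_assoc_tmul, W.counit_right]
  | add u v hu hv => rw [map_add, map_add, hu, hv]

/-! ### The M-identities -/

lemma M1 (h : B) :
    leg23 k B (W.Δ 1) * leg12 k B (W.Δ h) = ext12 k B W.Δ (W.Δ 1 * (h ⊗ₜ[k] (1:B))) := by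
  have h1 : leg12 k B (W.Δ h) = leg12 k B (W.Δ 1) * leg12 k B (W.Δ h) := by
    rw [← leg12_mul, e_mul_delta]
  rw [h1, ← mul_assoc, ← W.delta_one₂, ext12_mul]
  congr 1

lemma M1' (h : B) :
    leg12 k B (W.Δ h) * leg23 k B (W.Δ 1) = ext12 k B W.Δ ((h ⊗ₜ[k] (1:B)) * W.Δ 1) := by
  have h1 : leg12 k B (W.Δ h) = leg12 k B (W.Δ h) * leg12 k B (W.Δ 1) := by
    rw [← leg12_mul, delta_mul_e]
  rw [h1, mul_assoc, ← W.delta_one₁, ext12_mul]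
  congr 1

lemma coassoc_one : ext12 k B W.Δ (W.Δ 1) = ext23 k B W.Δ (W.Δ 1) := W.coassoc 1

lemma M2 (h : B) :
    leg12 k B (W.Δ 1) * leg23 k B (W.Δ h) = ext23 k B W.Δ (W.Δ 1 * ((1:B) ⊗ₜ[k] h)) := by
  have h1 : leg23 k B (W.Δ h) = leg23 k B (W.Δ 1) * leg23 k B (W.Δ h) := by
    rw [← leg23_mul, e_mul_delta]
  rw [h1, ← mul_assoc, ← W.delta_one₁, coassoc_one, ext23_mul]
  congr 1

lemma M2' (h : B) :
    leg23 k B (W.Δ h) * leg12 k B (W.Δ 1) = ext23 k B W.Δ (((1:B) ⊗ₜ[k] h) * W.Δ 1) := by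
  have h1 : leg23 k B (W.Δ h) = leg23 k B (W.Δ h) * leg23 k B (W.Δ 1) := by
    rw [← leg23_mul, delta_mul_e]
  rw [h1, mul_assoc, ← W.delta_one₂, coassoc_one, ext23_mul]
  congr 1

/-! ### L4 identities -/

lemma aux_L4a (w : B ⊗[k] B) (c d : B) :
    mid W (((1:B) ⊗ₜ[k] (c ⊗ₜ[k] d)) * leg12 k B w)
      = (epsR k B W.ε (((1:B) ⊗ₜ[k] c) * w)) ⊗ₜ[k] d := by
  induction w using TensorProduct.induction_on with
  | zero => simp
  | tmul p q =>
    simp only [leg12_tmul, Algebra.TensorProduct.tmul_mul_tmul, one_mul, mul_one,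
      mid_tmul, epsL_tmul, epsR_tmul]
    rw [TensorProduct.tmul_smul, TensorProduct.smul_tmul']
  | add u v hu hv =>
    rw [map_add, mul_add, map_add, hu, hv, mul_add, map_add, TensorProduct.add_tmul]

lemma L4a (h : B) :
    TensorProduct.map W.εs LinearMap.id (W.Δ h) = ((1:B) ⊗ₜ[k] h) * W.Δ 1 := by
  have key : TensorProduct.map W.εs LinearMap.id (W.Δ h)
      = mid W (leg23 k B (W.Δ h) * leg12 k B (W.Δ 1)) := by
    generalize W.Δ h = u
    induction u using TensorProduct.induction_on with
    | zero => simp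
    | tmul c d =>
      rw [leg23_apply, aux_L4a]
      simp [εs_apply]
    | add u v hu hv => rw [map_add, map_add, hu, hv, add_mul, map_add]
  rw [key, M2', mid_ext23]

end WHA
namespace WHA

variable {k B : Type*} [Field k] [Ring B] [Algebra k B] (W : WeakHopf k B)

/-! ### L4b -/

lemma aux_L4b (w : B ⊗[k] B) (c d : B) :
    mid W (leg23 k B w * (c ⊗ₜ[k] (d ⊗ₜ[k] (1:B))))
      = c ⊗ₜ[k] (epsL k B W.ε (w * (d ⊗ₜ[k] (1:B)))) := by
  induction w using TensorProduct.induction_on with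
  | zero => simp
  | tmul p q =>
    simp only [leg23_apply, Algebra.TensorProduct.tmul_mul_tmul, one_mul, mul_one,
      mid_tmul, epsL_tmul]
  | add u v hu hv =>
    rw [map_add, add_mul, map_add, hu, hv, add_mul, map_add, TensorProduct.tmul_add]

lemma L4b (h : B) :
    TensorProduct.map LinearMap.id W.εt (W.Δ h) = W.Δ 1 * (h ⊗ₜ[k] (1:B)) := by
  have key : TensorProduct.map LinearMap.id W.εt (W.Δ h)
      = mid W (leg23 k B (W.Δ 1) * leg12 k B (W.Δ h)) := by
    generalize W.Δ h = u
    induction u using TensorProduct.induction_on with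
    | zero => simp
    | tmul c d =>
      rw [leg12_tmul, aux_L4b]
      simp [εt_apply]
    | add u v hu hv => rw [map_add, map_add, hu, hv, mul_add, map_add]
  rw [key, M1, mid_ext12]

lemma eps_e_L : TensorProduct.map W.εs LinearMap.id (W.Δ 1) = W.Δ 1 := by
  rw [L4a, ← one2, one_mul]

lemma eps_e_R : TensorProduct.map LinearMap.id W.εt (W.Δ 1) = W.Δ 1 := by
  rw [L4b, ← one2, mul_one]

/-! ### Δ of the counital maps -/

/-- `p ⊗ q ↦ ε q • Δ p`. -/
noncomputable def XR (W : WeakHopf k B) : B ⊗[k] B →ₗ[k] B ⊗[k] B :=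
  (TensorProduct.rid k (B ⊗[k] B)).toLinearMap ∘ₗ TensorProduct.map W.Δ W.ε

@[simp] lemma XR_tmul (p q : B) : XR W (p ⊗ₜ[k] q) = W.ε q • W.Δ p := by
  simp [XR]

/-- `p ⊗ q ↦ ε p • Δ q`. -/
noncomputable def XL (W : WeakHopf k B) : B ⊗[k] B →ₗ[k] B ⊗[k] B :=
  (TensorProduct.lid k (B ⊗[k] B)).toLinearMap ∘ₗ TensorProduct.map W.ε W.Δ

@[simp] lemma XL_tmul (p q : B) : XL W (p ⊗ₜ[k] q) = W.ε p • W.Δ q := by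
  simp [XL]

lemma delta_epsR (u : B ⊗[k] B) : W.Δ (epsR k B W.ε u) = XR W u := by
  induction u using TensorProduct.induction_on with
  | zero => simp
  | tmul p q => simp
  | add u v hu hv => rw [map_add, map_add, map_add, hu, hv]

lemma delta_epsL (u : B ⊗[k] B) : W.Δ (epsL k B W.ε u) = XL W u := by
  induction u using TensorProduct.induction_on with
  | zero => simp
  | tmul p q => simp
  | add u v hu hv => rw [map_add, map_add, map_add, hu, hv]

/-- Contraction used for `Δ ∘ εs`. -/
noncomputable def YC (W : WeakHopf k B) (c : B) : B ⊗[k] (B ⊗[k] B) →ₗ[k] B ⊗[k] B :=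
  TensorProduct.map LinearMap.id (epsR k B (W.ε ∘ₗ LinearMap.mulLeft k c))

@[simp] lemma YC_tmul (c a : B) (u : B ⊗[k] B) :
    YC W c (a ⊗ₜ[k] u) = a ⊗ₜ[k] (epsR k B (W.ε ∘ₗ LinearMap.mulLeft k c) u) := by
  simp [YC]

lemma YC_assoc_tmul (c : B) (v : B ⊗[k] B) (q : B) :
    YC W c ((TensorProduct.assoc k B B B) (v ⊗ₜ[k] q)) = W.ε (c * q) • v := by
  induction v using TensorProduct.induction_on with
  | zero =>
    rw [TensorProduct.zero_tmul, LinearEquiv.map_zero, map_zero, smul_zero]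
  | tmul x y =>
    simp only [TensorProduct.assoc_tmul, YC_tmul, epsR_tmul, LinearMap.coe_comp,
      Function.comp_apply, LinearMap.mulLeft_apply]
    rw [TensorProduct.tmul_smul]
  | add u v hu hv =>
    rw [TensorProduct.add_tmul, LinearEquiv.map_add, map_add, hu, hv, smul_add]

lemma YC_ext12 (c : B) (u : B ⊗[k] B) :
    YC W c (ext12 k B W.Δ u) = XR W (((1:B) ⊗ₜ[k] c) * u) := by
  induction u using TensorProduct.induction_on with
  | zero => simp
  | tmul p q =>
    rw [ext12_tmul, YC_assoc_tmul]
    rw [Algebra.TensorProduct.tmul_mul_tmul, one_mul, XR_tmul]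
  | add u v hu hv => rw [map_add, map_add, hu, hv, mul_add, map_add]

lemma YC_legs₁ (c : B) (u w : B ⊗[k] B) :
    YC W c (leg12 k B u * leg23 k B w)
      = u * ((1:B) ⊗ₜ[k] (epsR k B (W.ε ∘ₗ LinearMap.mulLeft k c) w)) := by
  induction u using TensorProduct.induction_on with
  | zero => simp
  | tmul p q =>
    induction w using TensorProduct.induction_on with
    | zero => simp
    | tmul r s =>
      simp only [leg12_tmul, leg23_apply, Algebra.TensorProduct.tmul_mul_tmul, one_mul,
        mul_one, YC_tmul, epsR_tmul, LinearMap.coe_comp, Function.comp_apply,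
        LinearMap.mulLeft_apply]
      rw [mul_smul_comm]
    | add w w' hw hw' =>
      rw [map_add, mul_add, map_add, hw, hw', map_add, TensorProduct.tmul_add, mul_add]
  | add u u' hu hu' =>
    rw [map_add, add_mul, map_add, hu, hu', add_mul]

lemma YC_legs₂ (c : B) (w u : B ⊗[k] B) :
    YC W c (leg23 k B w * leg12 k B u)
      = ((1:B) ⊗ₜ[k] (epsR k B (W.ε ∘ₗ LinearMap.mulLeft k c) w)) * u := by
  induction u using TensorProduct.induction_on with
  | zero => simp
  | tmul p q =>
    induction w using TensorProduct.induction_on with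
    | zero => simp
    | tmul r s =>
      simp only [leg12_tmul, leg23_apply, Algebra.TensorProduct.tmul_mul_tmul, one_mul,
        mul_one, YC_tmul, epsR_tmul, LinearMap.coe_comp, Function.comp_apply,
        LinearMap.mulLeft_apply]
      rw [smul_mul_assoc]
    | add w w' hw hw' =>
      rw [map_add, add_mul, map_add, hw, hw', map_add, TensorProduct.tmul_add, add_mul]
  | add u u' hu hu' =>
    rw [map_add, mul_add, map_add, hu, hu', mul_add]

lemma εs_alt (c : B) :
    W.εs c = epsR k B (W.ε ∘ₗ LinearMap.mulLeft k c) (W.Δ 1) := by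
  rw [εs_apply]
  generalize W.Δ 1 = w
  induction w using TensorProduct.induction_on with
  | zero => simp
  | tmul p q =>
    simp [Algebra.TensorProduct.tmul_mul_tmul]
  | add u v hu hv => rw [mul_add, map_add, map_add, hu, hv]

lemma ΔHs_a (c : B) : W.Δ (W.εs c) = W.Δ 1 * ((1:B) ⊗ₜ[k] W.εs c) := by
  conv_lhs => rw [εs_apply]
  rw [delta_epsR, ← YC_ext12, W.delta_one₁, YC_legs₁, ← εs_alt]

lemma ΔHs_b (c : B) : W.Δ (W.εs c) = ((1:B) ⊗ₜ[k] W.εs c) * W.Δ 1 := by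
  conv_lhs => rw [εs_apply]
  rw [delta_epsR, ← YC_ext12, W.delta_one₂, YC_legs₂, ← εs_alt]

lemma COMM_s (c : B) :
    ((1:B) ⊗ₜ[k] W.εs c) * W.Δ 1 = W.Δ 1 * ((1:B) ⊗ₜ[k] W.εs c) := by
  rw [← ΔHs_a, ← ΔHs_b]

/-- Contraction used for `Δ ∘ εt`. -/
noncomputable def ZC (W : WeakHopf k B) (z : B) : B ⊗[k] (B ⊗[k] B) →ₗ[k] B ⊗[k] B :=
  (TensorProduct.lid k (B ⊗[k] B)).toLinearMap ∘ₗ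
    TensorProduct.map (W.ε ∘ₗ LinearMap.mulRight k z) LinearMap.id

@[simp] lemma ZC_tmul (z a : B) (u : B ⊗[k] B) :
    ZC W z (a ⊗ₜ[k] u) = W.ε (a * z) • u := by
  simp [ZC]

lemma ZC_ext23 (z : B) (u : B ⊗[k] B) :
    ZC W z (ext23 k B W.Δ u) = XL W (u * (z ⊗ₜ[k] (1:B))) := by
  induction u using TensorProduct.induction_on with
  | zero => simp
  | tmul p q =>
    rw [ext23_tmul, ZC_tmul, Algebra.TensorProduct.tmul_mul_tmul, mul_one, XL_tmul]
  | add u v hu hv => rw [map_add, map_add, hu, hv, add_mul, map_add]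

lemma εt_alt (z : B) :
    W.εt z = epsL k B (W.ε ∘ₗ LinearMap.mulRight k z) (W.Δ 1) := by
  rw [εt_apply]
  generalize W.Δ 1 = w
  induction w using TensorProduct.induction_on with
  | zero => simp
  | tmul p q =>
    simp [Algebra.TensorProduct.tmul_mul_tmul]
  | add u v hu hv => rw [add_mul, map_add, map_add, hu, hv]

lemma ZC_legs₁ (z : B) (u w : B ⊗[k] B) :
    ZC W z (leg12 k B u * leg23 k B w)
      = ((epsL k B (W.ε ∘ₗ LinearMap.mulRight k z) u) ⊗ₜ[k] (1:B)) * w := by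
  induction u using TensorProduct.induction_on with
  | zero => simp
  | tmul p q =>
    induction w using TensorProduct.induction_on with
    | zero => simp
    | tmul r s =>
      simp only [leg12_tmul, leg23_apply, Algebra.TensorProduct.tmul_mul_tmul, one_mul,
        mul_one, ZC_tmul, epsL_tmul]
      rw [TensorProduct.smul_tmul', smul_mul_assoc]
      rfl
    | add w w' hw hw' =>
      rw [map_add, mul_add, map_add, hw, hw', mul_add]
  | add u u' hu hu' =>
    rw [map_add, add_mul, map_add, hu, hu', map_add, TensorProduct.add_tmul, add_mul]

lemma ZC_legs₂ (z : B) (w u : B ⊗[k] B) :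
    ZC W z (leg23 k B w * leg12 k B u)
      = w * ((epsL k B (W.ε ∘ₗ LinearMap.mulRight k z) u) ⊗ₜ[k] (1:B)) := by
  induction u using TensorProduct.induction_on with
  | zero => simp
  | tmul p q =>
    induction w using TensorProduct.induction_on with
    | zero => simp
    | tmul r s =>
      simp only [leg12_tmul, leg23_apply, Algebra.TensorProduct.tmul_mul_tmul, one_mul,
        mul_one, ZC_tmul, epsL_tmul]
      rw [TensorProduct.smul_tmul', mul_smul_comm]
      rfl
    | add w w' hw hw' =>
      rw [map_add, add_mul, map_add, hw, hw', add_mul]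
  | add u u' hu hu' =>
    rw [map_add, mul_add, map_add, hu, hu', map_add, TensorProduct.add_tmul, mul_add]

lemma ΔHt_a (z : B) : W.Δ (W.εt z) = (W.εt z ⊗ₜ[k] (1:B)) * W.Δ 1 := by
  conv_lhs => rw [εt_apply]
  rw [delta_epsL, ← ZC_ext23, ← coassoc_one, W.delta_one₁, ZC_legs₁, ← εt_alt]

lemma ΔHt_b (z : B) : W.Δ (W.εt z) = W.Δ 1 * (W.εt z ⊗ₜ[k] (1:B)) := by
  conv_lhs => rw [εt_apply]
  rw [delta_epsL, ← ZC_ext23, ← coassoc_one, W.delta_one₂, ZC_legs₂, ← εt_alt]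

lemma COMM_t (z : B) :
    (W.εt z ⊗ₜ[k] (1:B)) * W.Δ 1 = W.Δ 1 * (W.εt z ⊗ₜ[k] (1:B)) := by
  rw [← ΔHt_a, ← ΔHt_b]

/-! ### Δ-absorption -/

lemma Dabs1 (c b : B) : W.Δ (W.εs c * b) = ((1:B) ⊗ₜ[k] W.εs c) * W.Δ b := by
  rw [W.comul_mul, ΔHs_b, mul_assoc, e_mul_delta]

lemma Dabs2 (c b : B) : W.Δ (b * W.εs c) = W.Δ b * ((1:B) ⊗ₜ[k] W.εs c) := by
  rw [W.comul_mul, ΔHs_a, ← mul_assoc, delta_mul_e]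

lemma Dabs3 (z b : B) : W.Δ (W.εt z * b) = (W.εt z ⊗ₜ[k] (1:B)) * W.Δ b := by
  rw [W.comul_mul, ΔHt_a, mul_assoc, e_mul_delta]

lemma Dabs4 (z b : B) : W.Δ (b * W.εt z) = W.Δ b * (W.εt z ⊗ₜ[k] (1:B)) := by
  rw [W.comul_mul, ΔHt_b, ← mul_assoc, delta_mul_e]

end WHA
namespace WHA

variable {k B : Type*} [Field k] [Ring B] [Algebra k B] (W : WeakHopf k B)

/-! ### Weak-counit consequences -/

lemma Aw (a b : B) :
    W.ε (a * b) = pairF k B (W.ε ∘ₗ LinearMap.mulLeft k a)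
      (W.ε ∘ₗ LinearMap.mulRight k b) (W.Δ 1) := by
  have := W.eps_weak₁ a 1 b
  rwa [mul_one] at this

lemma A'w (a b : B) :
    W.ε (a * b) = pairF k B (W.ε ∘ₗ LinearMap.mulRight k b)
      (W.ε ∘ₗ LinearMap.mulLeft k a) (W.Δ 1) := by
  have := W.eps_weak₂ a 1 b
  rwa [mul_one] at this

lemma f_epsR (g φ : B →ₗ[k] k) (u : B ⊗[k] B) :
    g (epsR k B φ u) = pairF k B g φ u := by
  induction u using TensorProduct.induction_on with
  | zero => simp
  | tmul p q => simp [mul_comm]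
  | add u v hu hv => rw [map_add, map_add, map_add, hu, hv]

lemma f_epsL (g φ : B →ₗ[k] k) (u : B ⊗[k] B) :
    g (epsL k B φ u) = pairF k B φ g u := by
  induction u using TensorProduct.induction_on with
  | zero => simp
  | tmul p q => simp
  | add u v hu hv => rw [map_add, map_add, map_add, hu, hv]

lemma pairF_shiftL (g : B →ₗ[k] k) (a : B) (w : B ⊗[k] B) :
    pairF k B g W.ε (((1:B) ⊗ₜ[k] a) * w)
      = pairF k B g (W.ε ∘ₗ LinearMap.mulLeft k a) w := by
  induction w using TensorProduct.induction_on with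
  | zero => simp
  | tmul p q =>
    rw [Algebra.TensorProduct.tmul_mul_tmul, one_mul]
    simp
  | add u v hu hv => rw [mul_add, map_add, map_add, hu, hv]

lemma pairF_shiftR (g : B →ₗ[k] k) (a : B) (w : B ⊗[k] B) :
    pairF k B W.ε g (w * (a ⊗ₜ[k] (1:B)))
      = pairF k B (W.ε ∘ₗ LinearMap.mulRight k a) g w := by
  induction w using TensorProduct.induction_on with
  | zero => simp
  | tmul p q =>
    rw [Algebra.TensorProduct.tmul_mul_tmul, mul_one]
    simp
  | add u v hu hv => rw [add_mul, map_add, map_add, hu, hv]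

lemma SC1 (a m : B) : W.ε (a * m) = W.ε (W.εs a * m) := by
  have h1 : W.ε (W.εs a * m) = (W.ε ∘ₗ LinearMap.mulRight k m) (W.εs a) := by simp
  rw [h1, εs_apply, f_epsR, pairF_shiftL, ← A'w]

lemma SC2 (m a : B) : W.ε (m * a) = W.ε (m * W.εt a) := by
  have h1 : W.ε (m * W.εt a) = (W.ε ∘ₗ LinearMap.mulLeft k m) (W.εt a) := by simp
  rw [h1, εt_apply, f_epsL, pairF_shiftR, ← A'w]

lemma L3a (a b : B) : W.εs (a * b) = W.εs (W.εs a * b) := by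
  rw [εs_apply, εs_apply (W := W) (h := W.εs a * b)]
  generalize W.Δ 1 = w
  induction w using TensorProduct.induction_on with
  | zero => simp
  | tmul p q =>
    simp only [Algebra.TensorProduct.tmul_mul_tmul, one_mul, epsR_tmul]
    rw [mul_assoc, mul_assoc, SC1]
  | add u v hu hv => rw [mul_add, mul_add, map_add, map_add, hu, hv]

lemma L3b (a b : B) : W.εt (a * b) = W.εt (a * W.εt b) := by
  rw [εt_apply, εt_apply (W := W) (h := a * W.εt b)]
  generalize W.Δ 1 = w
  induction w using TensorProduct.induction_on with
  | zero => simp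
  | tmul p q =>
    simp only [Algebra.TensorProduct.tmul_mul_tmul, mul_one, epsL_tmul]
    rw [← mul_assoc p a b, ← mul_assoc p a (W.εt b), SC2]
  | add u v hu hv => rw [add_mul, add_mul, map_add, map_add, hu, hv]

lemma εs_one : W.εs 1 = 1 := by
  rw [εs_apply, ← one2, one_mul, W.counit_right 1]

lemma εt_one : W.εt 1 = 1 := by
  rw [εt_apply, ← one2, mul_one, W.counit_left 1]

lemma εs_idem (b : B) : W.εs (W.εs b) = W.εs b := by
  have := L3a W b 1
  rw [mul_one, mul_one] at this
  exact this.symm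

lemma εt_idem (b : B) : W.εt (W.εt b) = W.εt b := by
  have := L3b W 1 b
  rw [one_mul, one_mul] at this
  exact this.symm

lemma εB1 {c : B} (hc : W.εt c = 1) (m : B) : W.ε (m * c) = W.ε m := by
  rw [SC2, hc, mul_one]

lemma εB2 {c : B} (hc : W.εs c = 1) (m : B) : W.ε (c * m) = W.ε m := by
  rw [SC1, hc, one_mul]

/-! ### The GEN lemmas -/

lemma epsL_map_εs (φ : B →ₗ[k] k) (z : B)
    (hφ : ∀ c m : B, φ (c * m) = φ (W.εs c * m)) (u : B ⊗[k] B) :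
    epsL k B (φ ∘ₗ LinearMap.mulRight k z) (TensorProduct.map W.εs LinearMap.id u)
      = epsL k B (φ ∘ₗ LinearMap.mulRight k z) u := by
  induction u using TensorProduct.induction_on with
  | zero => simp
  | tmul c d =>
    simp only [TensorProduct.map_tmul, LinearMap.id_coe, id_eq, epsL_tmul,
      LinearMap.coe_comp, Function.comp_apply, LinearMap.mulRight_apply]
    rw [← hφ]
  | add u v hu hv => rw [map_add, map_add, map_add, hu, hv]

lemma epsL_oneMul (φ : B →ₗ[k] k) (x : B) (w : B ⊗[k] B) :
    epsL k B φ (((1:B) ⊗ₜ[k] x) * w) = x * epsL k B φ w := by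
  induction w using TensorProduct.induction_on with
  | zero => simp
  | tmul p q =>
    rw [Algebra.TensorProduct.tmul_mul_tmul, one_mul]
    simp [mul_smul_comm]
  | add u v hu hv => rw [mul_add, map_add, map_add, hu, hv, mul_add]

lemma lamGEN (x z : B) :
    epsL k B (W.ε ∘ₗ LinearMap.mulRight k z) (W.Δ x) = x * W.εt z := by
  rw [← epsL_map_εs W W.ε z (fun c m => SC1 W c m), L4a, epsL_oneMul, ← εt_alt]

lemma epsR_map_εt (φ : B →ₗ[k] k) (z : B)
    (hφ : ∀ m c : B, φ (m * c) = φ (m * W.εt c)) (u : B ⊗[k] B) :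
    epsR k B (φ ∘ₗ LinearMap.mulLeft k z) (TensorProduct.map LinearMap.id W.εt u)
      = epsR k B (φ ∘ₗ LinearMap.mulLeft k z) u := by
  induction u using TensorProduct.induction_on with
  | zero => simp
  | tmul c d =>
    simp only [TensorProduct.map_tmul, LinearMap.id_coe, id_eq, epsR_tmul,
      LinearMap.coe_comp, Function.comp_apply, LinearMap.mulLeft_apply]
    rw [← hφ]
  | add u v hu hv => rw [map_add, map_add, map_add, hu, hv]

lemma epsR_mulOne (φ : B →ₗ[k] k) (x : B) (w : B ⊗[k] B) :
    epsR k B φ (w * (x ⊗ₜ[k] (1:B))) = epsR k B φ w * x := by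
  induction w using TensorProduct.induction_on with
  | zero => simp
  | tmul p q =>
    rw [Algebra.TensorProduct.tmul_mul_tmul, mul_one]
    simp [smul_mul_assoc]
  | add u v hu hv => rw [add_mul, map_add, map_add, hu, hv, add_mul]

lemma rhoGEN (x z : B) :
    epsR k B (W.ε ∘ₗ LinearMap.mulLeft k z) (W.Δ x) = W.εs z * x := by
  rw [← epsR_map_εt W W.ε z (fun m c => SC2 W m c), L4b, epsR_mulOne, ← εs_alt]

end WHA
namespace WHA

variable {k B : Type*} [Field k] [Ring B] [Algebra k B] (W : WeakHopf k B)

/-! ### Antipode basics -/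

lemma F1 (h : B) :
    mul2 k B (TensorProduct.map LinearMap.id W.S (W.Δ h)) = W.εt h := by
  rw [W.antipode₁, εt_apply]

lemma F2 (h : B) :
    mul2 k B (TensorProduct.map W.S LinearMap.id (W.Δ h)) = W.εs h := by
  rw [W.antipode₂, εs_apply]

lemma MAPW1 (u : B ⊗[k] B) :
    TensorProduct.map W.S (mul2 k B ∘ₗ TensorProduct.map LinearMap.id W.S)
        (ext23 k B W.Δ u)
      = TensorProduct.map W.S W.εt u := by
  induction u using TensorProduct.induction_on with
  | zero => simp
  | tmul c d =>
    rw [ext23_tmul]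
    simp only [TensorProduct.map_tmul, LinearMap.coe_comp, Function.comp_apply]
    rw [F1]
  | add u v hu hv => rw [map_add, map_add, map_add, hu, hv]

/-- `S h = Σ S(h₁) εt(h₂)`. -/
lemma starT (h : B) :
    mul2 k B (TensorProduct.map W.S W.εt (W.Δ h)) = W.S h := by
  rw [← MAPW1, W.antipode₃]

lemma MAPW2 (t : B ⊗[k] (B ⊗[k] B)) :
    mul2 k B (TensorProduct.map W.S (mul2 k B ∘ₗ TensorProduct.map LinearMap.id W.S) t)
      = mul2 k B (TensorProduct.map (mul2 k B ∘ₗ TensorProduct.map W.S LinearMap.id) W.S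
          ((TensorProduct.assoc k B B B).symm t)) := by
  induction t using TensorProduct.induction_on with
  | zero => simp only [map_zero, LinearEquiv.map_zero]
  | tmul a u =>
    induction u using TensorProduct.induction_on with
    | zero => simp only [TensorProduct.tmul_zero, map_zero, LinearEquiv.map_zero]
    | tmul b c =>
      simp only [TensorProduct.map_tmul, LinearMap.coe_comp, Function.comp_apply,
        TensorProduct.assoc_symm_tmul, mul2_tmul, LinearMap.id_coe, id_eq]
      rw [mul_assoc]
    | add u v hu hv =>
      simp only [TensorProduct.tmul_add, map_add, LinearEquiv.map_add, hu, hv]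
  | add t t' ht ht' =>
      simp only [map_add, LinearEquiv.map_add, ht, ht']

lemma MAPW3 (u : B ⊗[k] B) :
    TensorProduct.map (mul2 k B ∘ₗ TensorProduct.map W.S LinearMap.id) W.S
        ((TensorProduct.assoc k B B B).symm (ext12 k B W.Δ u))
      = TensorProduct.map W.εs W.S u := by
  induction u using TensorProduct.induction_on with
  | zero => simp only [map_zero, LinearEquiv.map_zero]
  | tmul c d =>
    rw [ext12_tmul, LinearEquiv.symm_apply_apply]
    simp only [TensorProduct.map_tmul, LinearMap.coe_comp, Function.comp_apply]
    rw [F2]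
  | add u v hu hv =>
    simp only [map_add, LinearEquiv.map_add, hu, hv]

/-- `S h = Σ εs(h₁) S(h₂)`. -/
lemma starS (h : B) :
    mul2 k B (TensorProduct.map W.εs W.S (W.Δ h)) = W.S h := by
  rw [← MAPW3, ← MAPW2, W.coassoc, W.antipode₃]

lemma map_εs_S (u : B ⊗[k] B) :
    mul2 k B (TensorProduct.map LinearMap.id W.S (TensorProduct.map W.εs LinearMap.id u))
      = mul2 k B (TensorProduct.map W.εs W.S u) := by
  induction u using TensorProduct.induction_on with
  | zero => simp
  | tmul c d => simp
  | add u v hu hv => simp only [map_add, hu, hv]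

lemma E1 (c : B) :
    mul2 k B (TensorProduct.map LinearMap.id W.S (((1:B) ⊗ₜ[k] c) * W.Δ 1)) = W.S c := by
  rw [← L4a, map_εs_S, starS]

lemma map_εt_S (u : B ⊗[k] B) :
    mul2 k B (TensorProduct.map W.S LinearMap.id (TensorProduct.map LinearMap.id W.εt u))
      = mul2 k B (TensorProduct.map W.S W.εt u) := by
  induction u using TensorProduct.induction_on with
  | zero => simp
  | tmul c d => simp
  | add u v hu hv => simp only [map_add, hu, hv]

lemma E1' (c : B) :
    mul2 k B (TensorProduct.map W.S LinearMap.id (W.Δ 1 * (c ⊗ₜ[k] (1:B)))) = W.S c := by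
  rw [← L4b, map_εt_S, starT]

lemma S_one : W.S 1 = 1 := by
  have h := E1 W 1
  rw [← one2, one_mul] at h
  rw [← h]
  have : TensorProduct.map LinearMap.id W.S (W.Δ 1)
      = TensorProduct.map LinearMap.id W.S (W.Δ 1) := rfl
  rw [F1, εt_one]

/-! ### Anchors -/

/-- `x ⊗ (y ⊗ z) ↦ (x * S y) ⊗ z`. -/
noncomputable def Xi1 (W : WeakHopf k B) : B ⊗[k] (B ⊗[k] B) →ₗ[k] B ⊗[k] B :=
  TensorProduct.map (mul2 k B ∘ₗ TensorProduct.map LinearMap.id W.S) LinearMap.id ∘ₗ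
    (TensorProduct.assoc k B B B).symm.toLinearMap

@[simp] lemma Xi1_tmul (x y z : B) :
    Xi1 W (x ⊗ₜ[k] (y ⊗ₜ[k] z)) = (x * W.S y) ⊗ₜ[k] z := by
  simp [Xi1]

lemma Xi1_ext12 (u : B ⊗[k] B) :
    Xi1 W (ext12 k B W.Δ u) = TensorProduct.map W.εt LinearMap.id u := by
  induction u using TensorProduct.induction_on with
  | zero => simp
  | tmul c d =>
    rw [ext12_tmul]
    have : Xi1 W ((TensorProduct.assoc k B B B) (W.Δ c ⊗ₜ[k] d))
        = (mul2 k B (TensorProduct.map LinearMap.id W.S (W.Δ c))) ⊗ₜ[k] d := by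
      rw [Xi1, LinearMap.comp_apply, LinearEquiv.coe_toLinearMap,
        LinearEquiv.symm_apply_apply]
      simp
    rw [this, F1]
    simp
  | add u v hu hv => rw [map_add, map_add, hu, hv, map_add]

lemma Xi1_aux (u : B ⊗[k] B) (r s : B) :
    Xi1 W (((1:B) ⊗ₜ[k] (r ⊗ₜ[k] s)) * leg12 k B u)
      = (mul2 k B (TensorProduct.map LinearMap.id W.S (((1:B) ⊗ₜ[k] r) * u))) ⊗ₜ[k] s := by
  induction u using TensorProduct.induction_on with
  | zero => simp
  | tmul p q =>
    rw [leg12_tmul]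
    simp [Algebra.TensorProduct.tmul_mul_tmul]
  | add u v hu hv =>
    rw [map_add, mul_add, map_add, hu, hv, mul_add, map_add, map_add,
      TensorProduct.add_tmul]

lemma Xi1_legs (w : B ⊗[k] B) :
    Xi1 W (leg23 k B w * leg12 k B (W.Δ 1)) = TensorProduct.map W.S LinearMap.id w := by
  induction w using TensorProduct.induction_on with
  | zero => simp
  | tmul r s =>
    rw [leg23_apply, Xi1_aux, E1]
    simp
  | add u v hu hv => rw [map_add, add_mul, map_add, hu, hv, map_add]

lemma anchor1 :
    TensorProduct.map W.εt LinearMap.id (W.Δ 1) = TensorProduct.map W.S LinearMap.id (W.Δ 1) := by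
  rw [← Xi1_ext12, W.delta_one₂, Xi1_legs]

/-- `x ⊗ (y ⊗ z) ↦ x ⊗ (S y * z)`. -/
noncomputable def Xi2 (W : WeakHopf k B) : B ⊗[k] (B ⊗[k] B) →ₗ[k] B ⊗[k] B :=
  TensorProduct.map LinearMap.id (mul2 k B ∘ₗ TensorProduct.map W.S LinearMap.id)

@[simp] lemma Xi2_tmul (x : B) (u : B ⊗[k] B) :
    Xi2 W (x ⊗ₜ[k] u) = x ⊗ₜ[k] (mul2 k B (TensorProduct.map W.S LinearMap.id u)) := by
  simp [Xi2]

lemma Xi2_ext23 (u : B ⊗[k] B) :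
    Xi2 W (ext23 k B W.Δ u) = TensorProduct.map LinearMap.id W.εs u := by
  induction u using TensorProduct.induction_on with
  | zero => simp
  | tmul c d =>
    rw [ext23_tmul, Xi2_tmul, F2]
    simp
  | add u v hu hv => rw [map_add, map_add, hu, hv, map_add]

lemma Xi2_aux (u : B ⊗[k] B) (p q : B) :
    Xi2 W (leg23 k B u * (p ⊗ₜ[k] (q ⊗ₜ[k] (1:B))))
      = p ⊗ₜ[k] (mul2 k B (TensorProduct.map W.S LinearMap.id (u * (q ⊗ₜ[k] (1:B))))) := by
  induction u using TensorProduct.induction_on with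
  | zero => simp
  | tmul r s =>
    rw [leg23_apply]
    simp [Algebra.TensorProduct.tmul_mul_tmul]
  | add u v hu hv =>
    rw [map_add, add_mul, map_add, hu, hv, add_mul, map_add, map_add,
      TensorProduct.tmul_add]

lemma Xi2_legs (u : B ⊗[k] B) :
    Xi2 W (leg23 k B (W.Δ 1) * leg12 k B u) = TensorProduct.map LinearMap.id W.S u := by
  induction u using TensorProduct.induction_on with
  | zero => simp
  | tmul p q =>
    rw [leg12_tmul, Xi2_aux, E1']
    simp
  | add u v hu hv => rw [map_add, mul_add, map_add, hu, hv, map_add]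

lemma anchor2 :
    TensorProduct.map LinearMap.id W.εs (W.Δ 1)
      = TensorProduct.map LinearMap.id W.S (W.Δ 1) := by
  rw [← Xi2_ext23, ← coassoc_one, W.delta_one₂, Xi2_legs]

lemma f_epsL_map (f : B →ₗ[k] B) (φ : B →ₗ[k] k) (u : B ⊗[k] B) :
    f (epsL k B φ u) = epsL k B φ (TensorProduct.map LinearMap.id f u) := by
  induction u using TensorProduct.induction_on with
  | zero => simp
  | tmul p q => simp
  | add u v hu hv => simp only [map_add, hu, hv]

lemma f_epsR_map (f : B →ₗ[k] B) (φ : B →ₗ[k] k) (u : B ⊗[k] B) :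
    f (epsR k B φ u) = epsR k B φ (TensorProduct.map f LinearMap.id u) := by
  induction u using TensorProduct.induction_on with
  | zero => simp
  | tmul p q => simp
  | add u v hu hv => simp only [map_add, hu, hv]

lemma SHt (z : B) : W.S (W.εt z) = W.εs (W.εt z) := by
  rw [εt_alt, f_epsL_map W.S, ← anchor2, ← f_epsL_map W.εs]

lemma SHs (c : B) : W.S (W.εs c) = W.εt (W.εs c) := by
  rw [εs_alt, f_epsR_map W.S, ← anchor1, ← f_epsR_map W.εt]

end WHA
namespace WHA

variable {k B : Type*} [Field k] [Ring B] [Algebra k B] (W : WeakHopf k B)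

lemma epsL_mulRight (φ : B →ₗ[k] k) (u : B ⊗[k] B) (y : B) :
    epsL k B φ u * y = epsL k B φ (u * ((1:B) ⊗ₜ[k] y)) := by
  induction u using TensorProduct.induction_on with
  | zero => simp
  | tmul p q =>
    rw [Algebra.TensorProduct.tmul_mul_tmul, mul_one]
    simp [smul_mul_assoc]
  | add u v hu hv => rw [map_add, add_mul, hu, hv, add_mul, map_add]

lemma comm_st (z c : B) : W.εt z * W.εs c = W.εs c * W.εt z := by
  rw [εt_alt, epsL_mulRight, ← COMM_s, epsL_oneMul]

lemma mul2_mapSid_mulOne (u : B ⊗[k] B) (y : B) :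
    mul2 k B (TensorProduct.map W.S LinearMap.id (u * ((1:B) ⊗ₜ[k] y)))
      = mul2 k B (TensorProduct.map W.S LinearMap.id u) * y := by
  induction u using TensorProduct.induction_on with
  | zero => simp
  | tmul p q =>
    rw [Algebra.TensorProduct.tmul_mul_tmul, mul_one]
    simp [mul_assoc]
  | add u v hu hv => rw [add_mul, map_add, map_add, map_add, map_add, hu, hv, add_mul]

lemma HsX (g c : B) : W.εs (g * W.εs c) = W.εs g * W.εs c := by
  rw [← F2, Dabs2, mul2_mapSid_mulOne, F2]

lemma εsR (d z : B) : W.εs (d * W.εt z) = W.S (W.εt z) * W.εs d := by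
  rw [L3a, ← comm_st, HsX, ← SHt]

lemma mul2_εsS_mulW (z : B) (u : B ⊗[k] B) :
    mul2 k B (TensorProduct.map W.εs W.S (u * (W.εt z ⊗ₜ[k] (1:B))))
      = W.S (W.εt z) * mul2 k B (TensorProduct.map W.εs W.S u) := by
  induction u using TensorProduct.induction_on with
  | zero => simp
  | tmul p q =>
    rw [Algebra.TensorProduct.tmul_mul_tmul, mul_one]
    simp only [TensorProduct.map_tmul, mul2_tmul]
    rw [εsR, mul_assoc]
  | add u v hu hv =>
    rw [add_mul, map_add, map_add, map_add, map_add, hu, hv, mul_add]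

/-- Right Ht special anti-multiplicativity. -/
lemma samRHt (b z : B) : W.S (b * W.εt z) = W.S (W.εt z) * W.S b := by
  rw [← starS W (b * W.εt z), Dabs4, mul2_εsS_mulW, starS]

lemma mul2_εsS_Wmul (w' : B) (u : B ⊗[k] B) :
    mul2 k B (TensorProduct.map W.εs W.S ((w' ⊗ₜ[k] (1:B)) * u))
      = mul2 k B (TensorProduct.map (W.εs ∘ₗ LinearMap.mulLeft k w') W.S u) := by
  induction u using TensorProduct.induction_on with
  | zero => simp
  | tmul p q =>
    rw [Algebra.TensorProduct.tmul_mul_tmul, one_mul]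
    simp
  | add u v hu hv =>
    rw [mul_add, map_add, map_add, map_add, map_add, hu, hv]

lemma εs_l_eq (w' : B) :
    W.εs ∘ₗ LinearMap.mulLeft k w' = W.εs ∘ₗ LinearMap.mulLeft k (W.εs w') := by
  apply LinearMap.ext
  intro d
  simp only [LinearMap.coe_comp, Function.comp_apply, LinearMap.mulLeft_apply]
  exact L3a W w' d

lemma εs_l_decomp (c : B) :
    W.εs ∘ₗ LinearMap.mulLeft k (W.εs c)
      = (mul2 k B ∘ₗ TensorProduct.map W.S LinearMap.id ∘ₗ
          LinearMap.mulLeft k ((1:B) ⊗ₜ[k] W.εs c)) ∘ₗ W.Δ := by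
  apply LinearMap.ext
  intro d
  simp only [LinearMap.coe_comp, Function.comp_apply, LinearMap.mulLeft_apply]
  rw [← Dabs1, F2]

lemma map_split (F : B ⊗[k] B →ₗ[k] B) (u : B ⊗[k] B) :
    TensorProduct.map (F ∘ₗ W.Δ) W.S u
      = TensorProduct.map F W.S (TensorProduct.map W.Δ LinearMap.id u) := by
  induction u using TensorProduct.induction_on with
  | zero => simp
  | tmul c d => simp
  | add u v hu hv => simp only [map_add, hu, hv]

lemma coassoc_symm (b : B) :
    TensorProduct.map W.Δ LinearMap.id (W.Δ b)
      = (TensorProduct.assoc k B B B).symm (ext23 k B W.Δ (W.Δ b)) := by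
  rw [← W.coassoc b]
  exact (LinearEquiv.symm_apply_apply _ _).symm

lemma MAPC2 (y : B) (t : B ⊗[k] (B ⊗[k] B)) :
    mul2 k B (TensorProduct.map
        (mul2 k B ∘ₗ TensorProduct.map W.S LinearMap.id ∘ₗ
          LinearMap.mulLeft k ((1:B) ⊗ₜ[k] y)) W.S
        ((TensorProduct.assoc k B B B).symm t))
      = mul2 k B (TensorProduct.map W.S
          (mul2 k B ∘ₗ TensorProduct.map (LinearMap.mulLeft k y) W.S) t) := by
  induction t using TensorProduct.induction_on with
  | zero => simp only [map_zero, LinearEquiv.map_zero]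
  | tmul a u =>
    induction u using TensorProduct.induction_on with
    | zero => simp only [TensorProduct.tmul_zero, map_zero, LinearEquiv.map_zero]
    | tmul b' c' =>
      simp only [TensorProduct.assoc_symm_tmul, TensorProduct.map_tmul,
        LinearMap.coe_comp, Function.comp_apply, LinearMap.mulLeft_apply,
        Algebra.TensorProduct.tmul_mul_tmul, one_mul, LinearMap.id_coe, id_eq, mul2_tmul]
      rw [mul_assoc]
    | add u v hu hv =>
      simp only [TensorProduct.tmul_add, map_add, LinearEquiv.map_add, hu, hv]
  | add t t' ht ht' => simp only [map_add, LinearEquiv.map_add, ht, ht']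

lemma mul2_lmul (y : B) (v : B ⊗[k] B) :
    mul2 k B (TensorProduct.map (LinearMap.mulLeft k y) W.S v)
      = y * mul2 k B (TensorProduct.map LinearMap.id W.S v) := by
  induction v using TensorProduct.induction_on with
  | zero => simp
  | tmul p q => simp [mul_assoc]
  | add u v hu hv => simp only [map_add, hu, hv, mul_add]

lemma MAPC3 (y : B) (u : B ⊗[k] B) :
    TensorProduct.map W.S
        (mul2 k B ∘ₗ TensorProduct.map (LinearMap.mulLeft k y) W.S) (ext23 k B W.Δ u)
      = TensorProduct.map W.S (LinearMap.mulLeft k y ∘ₗ W.εt) u := by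
  induction u using TensorProduct.induction_on with
  | zero => simp
  | tmul c d =>
    rw [ext23_tmul]
    simp only [TensorProduct.map_tmul, LinearMap.coe_comp, Function.comp_apply,
      LinearMap.mulLeft_apply]
    rw [mul2_lmul, F1]
  | add u v hu hv => simp only [map_add, hu, hv]

lemma comm_map (c : B) :
    LinearMap.mulLeft k (W.εs c) ∘ₗ W.εt = LinearMap.mulRight k (W.εs c) ∘ₗ W.εt := by
  apply LinearMap.ext
  intro d
  simp only [LinearMap.coe_comp, Function.comp_apply, LinearMap.mulLeft_apply,
    LinearMap.mulRight_apply]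
  exact (comm_st W d c).symm

lemma MAPC4 (y : B) (u : B ⊗[k] B) :
    mul2 k B (TensorProduct.map W.S (LinearMap.mulRight k y ∘ₗ W.εt) u)
      = mul2 k B (TensorProduct.map W.S W.εt u) * y := by
  induction u using TensorProduct.induction_on with
  | zero => simp
  | tmul p q => simp [mul_assoc]
  | add u v hu hv => simp only [map_add, hu, hv, add_mul]

/-- Left Ht special anti-multiplicativity. -/
lemma samLHt (z b : B) : W.S (W.εt z * b) = W.S b * W.S (W.εt z) := by
  rw [← starS W (W.εt z * b), Dabs3, mul2_εsS_Wmul, εs_l_eq, εs_l_decomp, map_split,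
    coassoc_symm, MAPC2, MAPC3, comm_map, MAPC4, starT, ← SHt]

end WHA
namespace WHA

variable {k B : Type*} [Field k] [Ring B] [Algebra k B] (W : WeakHopf k B)

/-! ### Generic map-composition helpers -/

lemma map_apply_comp_right {M N P Q R : Type*} [AddCommMonoid M] [AddCommMonoid N]
    [AddCommMonoid P] [AddCommMonoid Q] [AddCommMonoid R] [Module k M] [Module k N]
    [Module k P] [Module k Q] [Module k R]
    (F : M →ₗ[k] P) (g : Q →ₗ[k] R) (h : N →ₗ[k] Q) (s : M ⊗[k] N) :
    TensorProduct.map F (g ∘ₗ h) s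
      = TensorProduct.map F g (TensorProduct.map LinearMap.id h s) := by
  induction s using TensorProduct.induction_on with
  | zero => simp
  | tmul m n => simp
  | add s t hs ht => simp only [map_add, hs, ht]

lemma map_apply_comp_left {M N P Q R : Type*} [AddCommMonoid M] [AddCommMonoid N]
    [AddCommMonoid P] [AddCommMonoid Q] [AddCommMonoid R] [Module k M] [Module k N]
    [Module k P] [Module k Q] [Module k R]
    (g : Q →ₗ[k] R) (h : M →ₗ[k] Q) (F : N →ₗ[k] P) (s : M ⊗[k] N) :
    TensorProduct.map (g ∘ₗ h) F s
      = TensorProduct.map g F (TensorProduct.map h LinearMap.id s) := by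
  induction s using TensorProduct.induction_on with
  | zero => simp
  | tmul m n => simp
  | add s t hs ht => simp only [map_add, hs, ht]

lemma map_apply_comp₂ {M N P Q M' N' : Type*} [AddCommMonoid M] [AddCommMonoid N]
    [AddCommMonoid P] [AddCommMonoid Q] [AddCommMonoid M'] [AddCommMonoid N']
    [Module k M] [Module k N] [Module k P] [Module k Q] [Module k M'] [Module k N']
    (F : M' →ₗ[k] P) (G : N' →ₗ[k] Q) (h₁ : M →ₗ[k] M') (h₂ : N →ₗ[k] N') (s : M ⊗[k] N) :
    TensorProduct.map F G (TensorProduct.map h₁ h₂ s)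
      = TensorProduct.map (F ∘ₗ h₁) (G ∘ₗ h₂) s := by
  induction s using TensorProduct.induction_on with
  | zero => simp
  | tmul m n => simp
  | add s t hs ht => simp only [map_add, hs, ht]

/-! ### The maps Q and D2 -/

/-- `a ⊗ b ↦ S b * S a`. -/
noncomputable def Qm (W : WeakHopf k B) : B ⊗[k] B →ₗ[k] B :=
  mul2 k B ∘ₗ TensorProduct.map W.S W.S ∘ₗ (TensorProduct.comm k B B).toLinearMap

@[simp] lemma Qm_tmul (a b : B) : Qm W (a ⊗ₜ[k] b) = W.S b * W.S a := by
  simp [Qm]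

/-- `a ⊗ b ↦ Σ (a₁ ⊗ b₁) ⊗ (a₂ ⊗ b₂)`. -/
noncomputable def D2 (W : WeakHopf k B) :
    B ⊗[k] B →ₗ[k] (B ⊗[k] B) ⊗[k] (B ⊗[k] B) :=
  (TensorProduct.tensorTensorTensorComm k B B B B).toLinearMap ∘ₗ
    TensorProduct.map W.Δ W.Δ

lemma D2_tmul (a b : B) :
    D2 W (a ⊗ₜ[k] b)
      = (TensorProduct.tensorTensorTensorComm k B B B B) (W.Δ a ⊗ₜ[k] W.Δ b) := by
  simp [D2]

/-! ### Pointwise identities through σ -/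

lemma GL1' (u v : B ⊗[k] B) :
    mul2 k B (TensorProduct.map (W.S ∘ₗ mul2 k B) (W.εt ∘ₗ mul2 k B)
        ((TensorProduct.tensorTensorTensorComm k B B B B) (u ⊗ₜ[k] v)))
      = mul2 k B (TensorProduct.map W.S W.εt (u * v)) := by
  induction u using TensorProduct.induction_on with
  | zero => simp only [TensorProduct.zero_tmul, LinearEquiv.map_zero, map_zero, zero_mul]
  | tmul a₁ a₂ =>
    induction v using TensorProduct.induction_on with
    | zero => simp only [TensorProduct.tmul_zero, LinearEquiv.map_zero, map_zero, mul_zero]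
    | tmul b₁ b₂ =>
      rw [TensorProduct.tensorTensorTensorComm_tmul, Algebra.TensorProduct.tmul_mul_tmul]
      simp
    | add v v' hv hv' =>
      simp only [TensorProduct.tmul_add, LinearEquiv.map_add, map_add, mul_add, hv, hv']
  | add u u' hu hu' =>
    simp only [TensorProduct.add_tmul, LinearEquiv.map_add, map_add, add_mul, hu, hu']

lemma PM' (u v : B ⊗[k] B) :
    mul2 k B (TensorProduct.map (W.S ∘ₗ mul2 k B) (mul2 k B)
        ((TensorProduct.tensorTensorTensorComm k B B B B) (u ⊗ₜ[k] v)))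
      = mul2 k B (TensorProduct.map W.S LinearMap.id (u * v)) := by
  induction u using TensorProduct.induction_on with
  | zero => simp only [TensorProduct.zero_tmul, LinearEquiv.map_zero, map_zero, zero_mul]
  | tmul a₁ a₂ =>
    induction v using TensorProduct.induction_on with
    | zero => simp only [TensorProduct.tmul_zero, LinearEquiv.map_zero, map_zero, mul_zero]
    | tmul b₁ b₂ =>
      rw [TensorProduct.tensorTensorTensorComm_tmul, Algebra.TensorProduct.tmul_mul_tmul]
      simp
    | add v v' hv hv' =>
      simp only [TensorProduct.tmul_add, LinearEquiv.map_add, map_add, mul_add, hv, hv']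
  | add u u' hu hu' =>
    simp only [TensorProduct.add_tmul, LinearEquiv.map_add, map_add, add_mul, hu, hu']

lemma LEMA' (u v : B ⊗[k] B) :
    mul2 k B (TensorProduct.map (mul2 k B) (Qm W)
        ((TensorProduct.tensorTensorTensorComm k B B B B) (u ⊗ₜ[k] v)))
      = mul2 k B (TensorProduct.map LinearMap.id W.S
          (u * ((mul2 k B (TensorProduct.map LinearMap.id W.S v)) ⊗ₜ[k] (1:B)))) := by
  induction u using TensorProduct.induction_on with
  | zero => simp only [TensorProduct.zero_tmul, LinearEquiv.map_zero, map_zero, zero_mul]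
  | tmul c₁ c₂ =>
    induction v using TensorProduct.induction_on with
    | zero =>
      simp only [TensorProduct.tmul_zero, LinearEquiv.map_zero, map_zero,
        TensorProduct.zero_tmul, mul_zero]
    | tmul d₁ d₂ =>
      rw [TensorProduct.tensorTensorTensorComm_tmul, Algebra.TensorProduct.tmul_mul_tmul]
      simp [mul_assoc]
    | add v v' hv hv' =>
      simp only [TensorProduct.tmul_add, LinearEquiv.map_add, map_add,
        TensorProduct.add_tmul, mul_add, hv, hv']
  | add u u' hu hu' =>
    simp only [TensorProduct.add_tmul, LinearEquiv.map_add, map_add, add_mul, hu, hu']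

lemma MQ (c d : B) :
    mul2 k B (TensorProduct.map (mul2 k B) (Qm W)
        ((TensorProduct.tensorTensorTensorComm k B B B B) (W.Δ c ⊗ₜ[k] W.Δ d)))
      = W.εt (c * d) := by
  rw [LEMA', F1, ← Dabs4, F1, ← L3b]

lemma hET :
    W.εt ∘ₗ mul2 k B = (mul2 k B ∘ₗ TensorProduct.map (mul2 k B) (Qm W)) ∘ₗ D2 W := by
  apply TensorProduct.ext'
  intro c d
  simp only [LinearMap.coe_comp, Function.comp_apply, mul2_tmul]
  rw [D2_tmul, MQ]

lemma hES :
    (mul2 k B ∘ₗ TensorProduct.map (W.S ∘ₗ mul2 k B) (mul2 k B)) ∘ₗ D2 W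
      = W.εs ∘ₗ mul2 k B := by
  apply TensorProduct.ext'
  intro c d
  simp only [LinearMap.coe_comp, Function.comp_apply, mul2_tmul]
  rw [D2_tmul, PM', ← W.comul_mul, F2]

/-! ### D2 coassociativity -/

/-- reorder `((x⊗y)⊗z)⊗((x'⊗y')⊗z') ↦ (x⊗x')⊗((y⊗y')⊗(z⊗z'))`. -/
noncomputable def J1 : ((B ⊗[k] B) ⊗[k] B) ⊗[k] ((B ⊗[k] B) ⊗[k] B) →ₗ[k]
    (B ⊗[k] B) ⊗[k] ((B ⊗[k] B) ⊗[k] (B ⊗[k] B)) :=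
  (TensorProduct.assoc k (B ⊗[k] B) (B ⊗[k] B) (B ⊗[k] B)).toLinearMap ∘ₗ
    TensorProduct.map (TensorProduct.tensorTensorTensorComm k B B B B).toLinearMap
      LinearMap.id ∘ₗ
    (TensorProduct.tensorTensorTensorComm k (B ⊗[k] B) B (B ⊗[k] B) B).toLinearMap

@[simp] lemma J1_tmul (x y z x' y' z' : B) :
    J1 (((x ⊗ₜ[k] y) ⊗ₜ[k] z) ⊗ₜ[k] ((x' ⊗ₜ[k] y') ⊗ₜ[k] z'))
      = (x ⊗ₜ[k] x') ⊗ₜ[k] ((y ⊗ₜ[k] y') ⊗ₜ[k] (z ⊗ₜ[k] z')) := by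
  simp [J1, TensorProduct.tensorTensorTensorComm_tmul]

/-- reorder `(x⊗(y⊗z))⊗(x'⊗(y'⊗z')) ↦ (x⊗x')⊗((y⊗y')⊗(z⊗z'))`. -/
noncomputable def J2 : (B ⊗[k] (B ⊗[k] B)) ⊗[k] (B ⊗[k] (B ⊗[k] B)) →ₗ[k]
    (B ⊗[k] B) ⊗[k] ((B ⊗[k] B) ⊗[k] (B ⊗[k] B)) :=
  TensorProduct.map LinearMap.id
      (TensorProduct.tensorTensorTensorComm k B B B B).toLinearMap ∘ₗ
    (TensorProduct.tensorTensorTensorComm k B (B ⊗[k] B) B (B ⊗[k] B)).toLinearMap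

@[simp] lemma J2_tmul (x y z x' y' z' : B) :
    J2 ((x ⊗ₜ[k] (y ⊗ₜ[k] z)) ⊗ₜ[k] (x' ⊗ₜ[k] (y' ⊗ₜ[k] z')))
      = (x ⊗ₜ[k] x') ⊗ₜ[k] ((y ⊗ₜ[k] y') ⊗ₜ[k] (z ⊗ₜ[k] z')) := by
  simp [J2, TensorProduct.tensorTensorTensorComm_tmul]

lemma subA (p q : B ⊗[k] B) (c d : B) :
    (TensorProduct.assoc k (B ⊗[k] B) (B ⊗[k] B) (B ⊗[k] B))
        (((TensorProduct.tensorTensorTensorComm k B B B B) (p ⊗ₜ[k] q)) ⊗ₜ[k] (c ⊗ₜ[k] d))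
      = J1 ((p ⊗ₜ[k] c) ⊗ₜ[k] (q ⊗ₜ[k] d)) := by
  induction p using TensorProduct.induction_on with
  | zero =>
    simp only [TensorProduct.zero_tmul, LinearEquiv.map_zero, map_zero]
  | tmul x y =>
    induction q using TensorProduct.induction_on with
    | zero =>
      simp only [TensorProduct.tmul_zero, TensorProduct.zero_tmul, LinearEquiv.map_zero,
        map_zero]
    | tmul x' y' =>
      rw [TensorProduct.tensorTensorTensorComm_tmul, TensorProduct.assoc_tmul, J1_tmul]
    | add q q' hq hq' =>
      simp only [TensorProduct.tmul_add, TensorProduct.add_tmul, LinearEquiv.map_add,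
        map_add, hq, hq']
  | add p p' hp hp' =>
    simp only [TensorProduct.add_tmul, LinearEquiv.map_add, map_add, hp, hp']

lemma subB (p q : B ⊗[k] B) (c d : B) :
    (c ⊗ₜ[k] d) ⊗ₜ[k] ((TensorProduct.tensorTensorTensorComm k B B B B) (p ⊗ₜ[k] q))
      = J2 ((c ⊗ₜ[k] p) ⊗ₜ[k] (d ⊗ₜ[k] q)) := by
  induction p using TensorProduct.induction_on with
  | zero =>
    simp only [TensorProduct.zero_tmul, TensorProduct.tmul_zero, LinearEquiv.map_zero,
      map_zero]
  | tmul x y =>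
    induction q using TensorProduct.induction_on with
    | zero =>
      simp only [TensorProduct.tmul_zero, LinearEquiv.map_zero, map_zero]
    | tmul x' y' =>
      rw [TensorProduct.tensorTensorTensorComm_tmul, J2_tmul]
    | add q q' hq hq' =>
      simp only [TensorProduct.tmul_add, LinearEquiv.map_add, map_add, hq, hq']
  | add p p' hp hp' =>
    simp only [TensorProduct.add_tmul, TensorProduct.tmul_add, LinearEquiv.map_add,
      map_add, hp, hp']

lemma claimA (u v : B ⊗[k] B) :
    (TensorProduct.assoc k (B ⊗[k] B) (B ⊗[k] B) (B ⊗[k] B))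
        ((TensorProduct.map (D2 W) LinearMap.id)
          ((TensorProduct.tensorTensorTensorComm k B B B B) (u ⊗ₜ[k] v)))
      = J1 ((TensorProduct.map W.Δ LinearMap.id u) ⊗ₜ[k]
          (TensorProduct.map W.Δ LinearMap.id v)) := by
  induction u using TensorProduct.induction_on with
  | zero => simp only [TensorProduct.zero_tmul, LinearEquiv.map_zero, map_zero]
  | tmul a₁ a₂ =>
    induction v using TensorProduct.induction_on with
    | zero =>
      simp only [TensorProduct.tmul_zero, TensorProduct.zero_tmul, LinearEquiv.map_zero,
        map_zero]
    | tmul b₁ b₂ =>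
      rw [TensorProduct.tensorTensorTensorComm_tmul]
      simp only [TensorProduct.map_tmul, LinearMap.id_coe, id_eq]
      rw [D2_tmul, subA]
    | add v v' hv hv' =>
      simp only [TensorProduct.tmul_add, LinearEquiv.map_add, map_add, hv, hv']
  | add u u' hu hu' =>
    simp only [TensorProduct.add_tmul, LinearEquiv.map_add, map_add, hu, hu']

lemma claimB (u v : B ⊗[k] B) :
    (TensorProduct.map LinearMap.id (D2 W))
        ((TensorProduct.tensorTensorTensorComm k B B B B) (u ⊗ₜ[k] v))
      = J2 ((TensorProduct.map LinearMap.id W.Δ u) ⊗ₜ[k]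
          (TensorProduct.map LinearMap.id W.Δ v)) := by
  induction u using TensorProduct.induction_on with
  | zero => simp only [TensorProduct.zero_tmul, LinearEquiv.map_zero, map_zero]
  | tmul a₁ a₂ =>
    induction v using TensorProduct.induction_on with
    | zero =>
      simp only [TensorProduct.tmul_zero, TensorProduct.zero_tmul, LinearEquiv.map_zero,
        map_zero]
    | tmul b₁ b₂ =>
      rw [TensorProduct.tensorTensorTensorComm_tmul]
      simp only [TensorProduct.map_tmul, LinearMap.id_coe, id_eq]
      rw [D2_tmul, subB]
    | add v v' hv hv' =>
      simp only [TensorProduct.tmul_add, LinearEquiv.map_add, map_add, hv, hv']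
  | add u u' hu hu' =>
    simp only [TensorProduct.add_tmul, LinearEquiv.map_add, map_add, hu, hu']

lemma claimJ (s t : B ⊗[k] (B ⊗[k] B)) :
    J1 (((TensorProduct.assoc k B B B).symm s) ⊗ₜ[k]
        ((TensorProduct.assoc k B B B).symm t))
      = J2 (s ⊗ₜ[k] t) := by
  induction s using TensorProduct.induction_on with
  | zero => simp only [TensorProduct.zero_tmul, LinearEquiv.map_zero, map_zero]
  | tmul x u =>
    induction u using TensorProduct.induction_on with
    | zero =>
      simp only [TensorProduct.tmul_zero, TensorProduct.zero_tmul, LinearEquiv.map_zero,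
        map_zero]
    | tmul y z =>
      induction t using TensorProduct.induction_on with
      | zero => simp only [TensorProduct.tmul_zero, LinearEquiv.map_zero, map_zero]
      | tmul x' u' =>
        induction u' using TensorProduct.induction_on with
        | zero =>
          simp only [TensorProduct.tmul_zero, LinearEquiv.map_zero, map_zero]
        | tmul y' z' =>
          rw [TensorProduct.assoc_symm_tmul, TensorProduct.assoc_symm_tmul,
            J1_tmul, J2_tmul]
        | add w w' hw hw' =>
          simp only [TensorProduct.tmul_add, LinearEquiv.map_add, map_add, hw, hw']
      | add t t' ht ht' =>
        simp only [TensorProduct.tmul_add, LinearEquiv.map_add, map_add, ht, ht']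
    | add u u' hu hu' =>
      simp only [TensorProduct.tmul_add, TensorProduct.add_tmul, LinearEquiv.map_add,
        map_add, hu, hu']
  | add s s' hs hs' =>
    simp only [TensorProduct.add_tmul, LinearEquiv.map_add, map_add, hs, hs']

lemma ext23_eq (u : B ⊗[k] B) :
    ext23 k B W.Δ u = TensorProduct.map LinearMap.id W.Δ u := rfl

lemma D2CO (a b : B) :
    (TensorProduct.assoc k (B ⊗[k] B) (B ⊗[k] B) (B ⊗[k] B))
        ((TensorProduct.map (D2 W) LinearMap.id) (D2 W (a ⊗ₜ[k] b)))
      = (TensorProduct.map LinearMap.id (D2 W)) (D2 W (a ⊗ₜ[k] b)) := by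
  rw [D2_tmul, claimA, claimB]
  have ha : TensorProduct.map W.Δ LinearMap.id (W.Δ a)
      = (TensorProduct.assoc k B B B).symm (TensorProduct.map LinearMap.id W.Δ (W.Δ a)) := by
    rw [← ext23_eq, coassoc_symm]
  have hb : TensorProduct.map W.Δ LinearMap.id (W.Δ b)
      = (TensorProduct.assoc k B B B).symm (TensorProduct.map LinearMap.id W.Δ (W.Δ b)) := by
    rw [← ext23_eq, coassoc_symm]
  rw [ha, hb, claimJ]

/-! ### Mult-assoc at the level of triple tensors of B⊗B -/

lemma ASSOC3 (F G H : B ⊗[k] B →ₗ[k] B)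
    (t : ((B ⊗[k] B) ⊗[k] (B ⊗[k] B)) ⊗[k] (B ⊗[k] B)) :
    mul2 k B (TensorProduct.map (mul2 k B ∘ₗ TensorProduct.map F G) H t)
      = mul2 k B (TensorProduct.map F (mul2 k B ∘ₗ TensorProduct.map G H)
          ((TensorProduct.assoc k (B ⊗[k] B) (B ⊗[k] B) (B ⊗[k] B)) t)) := by
  induction t using TensorProduct.induction_on with
  | zero => simp only [map_zero, LinearEquiv.map_zero]
  | tmul s z =>
    induction s using TensorProduct.induction_on with
    | zero => simp only [TensorProduct.zero_tmul, map_zero, LinearEquiv.map_zero]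
    | tmul x y =>
      rw [TensorProduct.assoc_tmul]
      simp only [TensorProduct.map_tmul, LinearMap.coe_comp, Function.comp_apply,
        mul2_tmul]
      rw [mul_assoc]
    | add s s' hs hs' =>
      simp only [TensorProduct.add_tmul, map_add, LinearEquiv.map_add, hs, hs']
  | add t t' ht ht' =>
    simp only [map_add, LinearEquiv.map_add, ht, ht']

end WHA
namespace WHA

variable {k B : Type*} [Field k] [Ring B] [Algebra k B] (W : WeakHopf k B)

/-- The key "C'" computation: `Σ εs(w b₁) S(b₂) = S(b) εs(w)`. -/
lemma CP (w b : B) :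
    mul2 k B (TensorProduct.map (W.εs ∘ₗ LinearMap.mulLeft k w) W.S (W.Δ b))
      = W.S b * W.εs w := by
  rw [εs_l_eq, εs_l_decomp, map_split, coassoc_symm, MAPC2, MAPC3, comm_map, MAPC4, starT]

lemma sub_σ (p q : B) (v : B ⊗[k] B) :
    (TensorProduct.tensorTensorTensorComm k B B B B) ((p ⊗ₜ[k] q) ⊗ₜ[k] v)
      = TensorProduct.map (TensorProduct.mk k B B p) (TensorProduct.mk k B B q) v := by
  induction v using TensorProduct.induction_on with
  | zero => simp only [TensorProduct.tmul_zero, LinearEquiv.map_zero, map_zero]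
  | tmul c d => rw [TensorProduct.tensorTensorTensorComm_tmul]; simp
  | add v v' hv hv' =>
    simp only [TensorProduct.tmul_add, LinearEquiv.map_add, map_add, hv, hv']

lemma comp_mk₁ (p : B) :
    (W.εs ∘ₗ mul2 k B) ∘ₗ TensorProduct.mk k B B p = W.εs ∘ₗ LinearMap.mulLeft k p := by
  apply LinearMap.ext; intro c; simp

lemma comp_mk₂ (q : B) :
    Qm W ∘ₗ TensorProduct.mk k B B q = LinearMap.mulRight k (W.S q) ∘ₗ W.S := by
  apply LinearMap.ext; intro d; simp

lemma pull_R (F : B →ₗ[k] B) (y : B) (v : B ⊗[k] B) :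
    mul2 k B (TensorProduct.map F (LinearMap.mulRight k y ∘ₗ W.S) v)
      = mul2 k B (TensorProduct.map F W.S v) * y := by
  induction v using TensorProduct.induction_on with
  | zero => simp
  | tmul c d => simp [mul_assoc]
  | add v v' hv hv' => simp only [map_add, hv, hv', add_mul]

lemma pull_L (F : B →ₗ[k] B) (y : B) (v : B ⊗[k] B) :
    mul2 k B (TensorProduct.map (LinearMap.mulLeft k y ∘ₗ F) W.S v)
      = y * mul2 k B (TensorProduct.map F W.S v) := by
  induction v using TensorProduct.induction_on with
  | zero => simp
  | tmul c d => simp [mul_assoc]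
  | add v v' hv hv' => simp only [map_add, hv, hv', mul_add]

lemma claim_δΦ (u : B ⊗[k] B) (b : B) :
    mul2 k B (TensorProduct.map (W.εs ∘ₗ mul2 k B) (Qm W)
        ((TensorProduct.tensorTensorTensorComm k B B B B) (u ⊗ₜ[k] W.Δ b)))
      = mul2 k B (TensorProduct.map (LinearMap.mulLeft k (W.S b) ∘ₗ W.εs) W.S u) := by
  induction u using TensorProduct.induction_on with
  | zero => simp only [TensorProduct.zero_tmul, LinearEquiv.map_zero, map_zero]
  | tmul p q =>
    rw [sub_σ, map_apply_comp₂, comp_mk₁, comp_mk₂, pull_R, CP]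
    simp [mul_assoc]
  | add u u' hu hu' =>
    simp only [TensorProduct.add_tmul, LinearEquiv.map_add, map_add, hu, hu']

/-- **Anti-multiplicativity of the antipode.** -/
lemma AM (a b : B) : W.S (a * b) = W.S b * W.S a := by
  have h0 : W.S (a * b)
      = mul2 k B (TensorProduct.map (W.S ∘ₗ mul2 k B) (W.εt ∘ₗ mul2 k B)
          (D2 W (a ⊗ₜ[k] b))) := by
    rw [D2_tmul, GL1', ← W.comul_mul, starT]
  rw [h0, hET, map_apply_comp_right, ← D2CO, ← ASSOC3, ← map_apply_comp_left, hES,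
    D2_tmul, claim_δΦ, pull_L, starS]

end WHA
namespace WHA

variable {k B : Type*} [Field k] [Ring B] [Algebra k B] (W : WeakHopf k B)

/-! ### Counit helpers for the gauge-transformed twist -/

lemma insert_εs_fst (u v : B ⊗[k] B) :
    epsL k B W.ε ((TensorProduct.map W.εs LinearMap.id v) * u) = epsL k B W.ε (v * u) := by
  induction v using TensorProduct.induction_on with
  | zero => simp
  | tmul c d =>
    induction u using TensorProduct.induction_on with
    | zero => simp
    | tmul p q =>
      simp only [TensorProduct.map_tmul, LinearMap.id_coe, id_eq,
        Algebra.TensorProduct.tmul_mul_tmul, epsL_tmul]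
      rw [← SC1]
    | add u u' hu hu' => rw [mul_add, map_add, mul_add, map_add, hu, hu']
  | add v v' hv hv' => rw [map_add, add_mul, map_add, add_mul, map_add, hv, hv']

lemma insert_εt_snd (u v : B ⊗[k] B) :
    epsR k B W.ε (u * (TensorProduct.map LinearMap.id W.εt v)) = epsR k B W.ε (u * v) := by
  induction v using TensorProduct.induction_on with
  | zero => simp
  | tmul c d =>
    induction u using TensorProduct.induction_on with
    | zero => simp
    | tmul p q =>
      simp only [TensorProduct.map_tmul, LinearMap.id_coe, id_eq,
        Algebra.TensorProduct.tmul_mul_tmul, epsR_tmul]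
      rw [← SC2]
    | add u u' hu hu' => rw [add_mul, map_add, add_mul, map_add, hu, hu']
  | add v v' hv hv' => rw [map_add, mul_add, map_add, mul_add, map_add, hv, hv']

/-- `d ↦ Σ ε(d 1₁) 1₂`. -/
noncomputable def εo (W : WeakHopf k B) : B →ₗ[k] B :=
  epsL k B W.ε ∘ₗ LinearMap.mulRight k (W.Δ 1) ∘ₗ (TensorProduct.mk k B B).flip 1

lemma εo_apply (d : B) : εo W d = epsL k B W.ε ((d ⊗ₜ[k] (1:B)) * W.Δ 1) := by
  simp [εo, LinearMap.mulRight_apply]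

/-- `b ↦ Σ 1₁ ε(1₂ b)`. -/
noncomputable def εoo (W : WeakHopf k B) : B →ₗ[k] B :=
  epsR k B W.ε ∘ₗ LinearMap.mulLeft k (W.Δ 1) ∘ₗ TensorProduct.mk k B B 1

lemma εoo_apply (b : B) : εoo W b = epsR k B W.ε (W.Δ 1 * ((1:B) ⊗ₜ[k] b)) := by
  simp [εoo, LinearMap.mulLeft_apply]

lemma pairF_shiftL2 (g : B →ₗ[k] k) (d : B) (w : B ⊗[k] B) :
    pairF k B W.ε g ((d ⊗ₜ[k] (1:B)) * w) = pairF k B (W.ε ∘ₗ LinearMap.mulLeft k d) g w := by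
  induction w using TensorProduct.induction_on with
  | zero => simp
  | tmul p q =>
    rw [Algebra.TensorProduct.tmul_mul_tmul, one_mul]
    simp
  | add u v hu hv => rw [mul_add, map_add, map_add, hu, hv]

lemma pairF_shiftR2 (g : B →ₗ[k] k) (b : B) (w : B ⊗[k] B) :
    pairF k B g W.ε (w * ((1:B) ⊗ₜ[k] b)) = pairF k B g (W.ε ∘ₗ LinearMap.mulRight k b) w := by
  induction w using TensorProduct.induction_on with
  | zero => simp
  | tmul p q =>
    rw [Algebra.TensorProduct.tmul_mul_tmul, mul_one]
    simp
  | add u v hu hv => rw [add_mul, map_add, map_add, hu, hv]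

lemma SCo (d q : B) : W.ε (d * q) = W.ε (εo W d * q) := by
  have h1 : W.ε (εo W d * q) = (W.ε ∘ₗ LinearMap.mulRight k q) (εo W d) := by simp
  rw [h1, εo_apply, f_epsL, pairF_shiftL2, ← Aw]

lemma SCoo (a b : B) : W.ε (a * b) = W.ε (a * εoo W b) := by
  have h1 : W.ε (a * εoo W b) = (W.ε ∘ₗ LinearMap.mulLeft k a) (εoo W b) := by simp
  rw [h1, εoo_apply, f_epsR, pairF_shiftR2, ← Aw]

lemma insert_εo_snd (v u : B ⊗[k] B) :
    epsR k B W.ε ((TensorProduct.map LinearMap.id (εo W) v) * u) = epsR k B W.ε (v * u) := by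
  induction v using TensorProduct.induction_on with
  | zero => simp
  | tmul c d =>
    induction u using TensorProduct.induction_on with
    | zero => simp
    | tmul p q =>
      simp only [TensorProduct.map_tmul, LinearMap.id_coe, id_eq,
        Algebra.TensorProduct.tmul_mul_tmul, epsR_tmul]
      rw [← SCo]
    | add u u' hu hu' => rw [mul_add, map_add, mul_add, map_add, hu, hu']
  | add v v' hv hv' => rw [map_add, add_mul, map_add, add_mul, map_add, hv, hv']

lemma insert_εoo_fst (u v : B ⊗[k] B) :
    epsL k B W.ε (u * (TensorProduct.map (εoo W) LinearMap.id v)) = epsL k B W.ε (u * v) := by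
  induction v using TensorProduct.induction_on with
  | zero => simp
  | tmul c d =>
    induction u using TensorProduct.induction_on with
    | zero => simp
    | tmul p q =>
      simp only [TensorProduct.map_tmul, LinearMap.id_coe, id_eq,
        Algebra.TensorProduct.tmul_mul_tmul, epsL_tmul]
      rw [← SCoo]
    | add u u' hu hu' => rw [add_mul, map_add, add_mul, map_add, hu, hu']
  | add v v' hv hv' => rw [map_add, mul_add, map_add, mul_add, map_add, hv, hv']

/-- `(id ⊗ εo) ∘ Δ = Δ1 ⋅ (h ⊗ 1)`-analogue: `Σ h₁ ⊗ εo(h₂) = (h ⊗ 1) Δ1`. -/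
lemma L4o (h : B) :
    TensorProduct.map LinearMap.id (εo W) (W.Δ h) = (h ⊗ₜ[k] (1:B)) * W.Δ 1 := by
  have key : TensorProduct.map LinearMap.id (εo W) (W.Δ h)
      = mid W (leg12 k B (W.Δ h) * leg23 k B (W.Δ 1)) := by
    generalize W.Δ h = u
    induction u using TensorProduct.induction_on with
    | zero => simp
    | tmul c d =>
      have : leg12 k B (c ⊗ₜ[k] d) * leg23 k B (W.Δ 1)
          = c ⊗ₜ[k] ((d ⊗ₜ[k] (1:B)) * W.Δ 1) := by
        generalize W.Δ 1 = w
        induction w using TensorProduct.induction_on with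
        | zero => simp
        | tmul p q =>
          rw [leg12_tmul, leg23_apply, Algebra.TensorProduct.tmul_mul_tmul, mul_one]
        | add w w' hw hw' => rw [map_add, mul_add, hw, hw', mul_add, TensorProduct.tmul_add]
      rw [this, mid_tmul, ← εo_apply]
      simp
    | add u v hu hv => rw [map_add, map_add, hu, hv, add_mul, map_add]
  rw [key, M1', mid_ext12]

/-- `Σ εoo(h₁) ⊗ h₂ = Δ1 ⋅ (1 ⊗ h)`. -/
lemma aux_L4oo (w : B ⊗[k] B) (c d : B) :
    mid W (leg12 k B w * leg23 k B (c ⊗ₜ[k] d))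
      = (epsR k B W.ε (w * ((1:B) ⊗ₜ[k] c))) ⊗ₜ[k] d := by
  induction w using TensorProduct.induction_on with
  | zero => simp
  | tmul p q =>
    simp only [leg12_tmul, leg23_apply, Algebra.TensorProduct.tmul_mul_tmul, one_mul,
      mul_one, mid_tmul, epsL_tmul, epsR_tmul]
    rw [TensorProduct.tmul_smul, TensorProduct.smul_tmul']
  | add u v hu hv =>
    rw [map_add, add_mul, map_add, hu, hv, add_mul, map_add, TensorProduct.add_tmul]

lemma L4oo (h : B) :
    TensorProduct.map (εoo W) LinearMap.id (W.Δ h) = W.Δ 1 * ((1:B) ⊗ₜ[k] h) := by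
  have key : TensorProduct.map (εoo W) LinearMap.id (W.Δ h)
      = mid W (leg12 k B (W.Δ 1) * leg23 k B (W.Δ h)) := by
    generalize W.Δ h = u
    induction u using TensorProduct.induction_on with
    | zero => simp
    | tmul c d =>
      rw [aux_L4oo, ← εoo_apply]
      simp
    | add u v hu hv => rw [map_add, map_add, hu, hv, mul_add, map_add]
  rw [key, M2, mid_ext23]

end WHA
namespace WHA

variable {k B : Type*} [Field k] [Ring B] [Algebra k B] (W : WeakHopf k B)

/-! ### Stripping lemmas under ε assuming counital conditions -/

lemma epsL_strip_xx {x : B} (hx : W.εt x = 1) (u : B ⊗[k] B) :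
    epsL k B W.ε (u * (x ⊗ₜ[k] x)) = epsL k B W.ε u * x := by
  induction u using TensorProduct.induction_on with
  | zero => simp
  | tmul p q =>
    rw [Algebra.TensorProduct.tmul_mul_tmul]
    simp only [epsL_tmul]
    rw [εB1 W hx p, smul_mul_assoc]
  | add u v hu hv => rw [add_mul, map_add, map_add, hu, hv, add_mul]

lemma epsR_strip_xx {x : B} (hx : W.εt x = 1) (u : B ⊗[k] B) :
    epsR k B W.ε (u * (x ⊗ₜ[k] x)) = epsR k B W.ε u * x := by
  induction u using TensorProduct.induction_on with
  | zero => simp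
  | tmul p q =>
    rw [Algebra.TensorProduct.tmul_mul_tmul]
    simp only [epsR_tmul]
    rw [εB1 W hx q, smul_mul_assoc]
  | add u v hu hv => rw [add_mul, map_add, map_add, hu, hv, add_mul]

lemma epsL_strip_xixi {xi : B} (hxi : W.εs xi = 1) (u : B ⊗[k] B) :
    epsL k B W.ε ((xi ⊗ₜ[k] xi) * u) = xi * epsL k B W.ε u := by
  induction u using TensorProduct.induction_on with
  | zero => simp
  | tmul p q =>
    rw [Algebra.TensorProduct.tmul_mul_tmul]
    simp only [epsL_tmul]
    rw [εB2 W hxi p, mul_smul_comm]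
  | add u v hu hv => rw [mul_add, map_add, map_add, hu, hv, mul_add]

lemma epsR_strip_xixi {xi : B} (hxi : W.εs xi = 1) (u : B ⊗[k] B) :
    epsR k B W.ε ((xi ⊗ₜ[k] xi) * u) = xi * epsR k B W.ε u := by
  induction u using TensorProduct.induction_on with
  | zero => simp
  | tmul p q =>
    rw [Algebra.TensorProduct.tmul_mul_tmul]
    simp only [epsR_tmul]
    rw [εB2 W hxi q, mul_smul_comm]
  | add u v hu hv => rw [mul_add, map_add, map_add, hu, hv, mul_add]

lemma epsR_oneMul' (φ : B →ₗ[k] k) (c : B) (u : B ⊗[k] B) :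
    epsR k B φ ((c ⊗ₜ[k] (1:B)) * u) = c * epsR k B φ u := by
  induction u using TensorProduct.induction_on with
  | zero => simp
  | tmul p q =>
    rw [Algebra.TensorProduct.tmul_mul_tmul, one_mul]
    simp [mul_smul_comm]
  | add u v hu hv => rw [mul_add, map_add, map_add, hu, hv, mul_add]

/-! ### Splitting of ext12/ext23 on pure tensors -/

lemma assoc_split (u : B ⊗[k] B) (d : B) :
    (TensorProduct.assoc k B B B) (u ⊗ₜ[k] d)
      = leg12 k B u * ((1:B) ⊗ₜ[k] ((1:B) ⊗ₜ[k] d)) := by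
  induction u using TensorProduct.induction_on with
  | zero =>
    rw [TensorProduct.zero_tmul, LinearEquiv.map_zero, map_zero, zero_mul]
  | tmul a b =>
    rw [TensorProduct.assoc_tmul, leg12_tmul, Algebra.TensorProduct.tmul_mul_tmul,
      Algebra.TensorProduct.tmul_mul_tmul, mul_one, mul_one, one_mul]
  | add u v hu hv =>
    rw [TensorProduct.add_tmul, LinearEquiv.map_add, hu, hv, map_add, add_mul]

lemma esplit12 (c d : B) :
    ext12 k B W.Δ (c ⊗ₜ[k] d)
      = leg12 k B (W.Δ c) * ((1:B) ⊗ₜ[k] ((1:B) ⊗ₜ[k] d)) := by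
  rw [ext12_tmul, assoc_split]

lemma tmul_split (c : B) (u : B ⊗[k] B) :
    c ⊗ₜ[k] u = (c ⊗ₜ[k] (1 : B ⊗[k] B)) * leg23 k B u := by
  rw [leg23_apply, Algebra.TensorProduct.tmul_mul_tmul, mul_one, one_mul]

lemma esplit23 (c d : B) :
    ext23 k B W.Δ (c ⊗ₜ[k] d)
      = (c ⊗ₜ[k] (1 : B ⊗[k] B)) * leg23 k B (W.Δ d) := by
  rw [ext23_tmul, tmul_split]

lemma pi3_comm (c : B) (u : B ⊗[k] B) :
    ((1:B) ⊗ₜ[k] ((1:B) ⊗ₜ[k] c)) * leg12 k B u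
      = leg12 k B u * ((1:B) ⊗ₜ[k] ((1:B) ⊗ₜ[k] c)) := by
  induction u using TensorProduct.induction_on with
  | zero => simp
  | tmul a b =>
    rw [leg12_tmul, Algebra.TensorProduct.tmul_mul_tmul, Algebra.TensorProduct.tmul_mul_tmul,
      Algebra.TensorProduct.tmul_mul_tmul, Algebra.TensorProduct.tmul_mul_tmul]
    rw [one_mul, mul_one, one_mul, mul_one, one_mul, mul_one]
  | add u v hu hv => rw [map_add, mul_add, add_mul, hu, hv]

lemma pi1_comm (c : B) (u : B ⊗[k] B) :
    (c ⊗ₜ[k] (1 : B ⊗[k] B)) * leg23 k B u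
      = leg23 k B u * (c ⊗ₜ[k] (1 : B ⊗[k] B)) := by
  rw [leg23_apply, Algebra.TensorProduct.tmul_mul_tmul, Algebra.TensorProduct.tmul_mul_tmul,
    one_mul, mul_one, one_mul, mul_one]

/-! ### Conjugation and products -/

lemma conj_map (xi x : B) (u : B ⊗[k] B) :
    TensorProduct.map (conj k xi x) (conj k xi x) u
      = (xi ⊗ₜ[k] xi) * u * (x ⊗ₜ[k] x) := by
  induction u using TensorProduct.induction_on with
  | zero => simp
  | tmul p q =>
    simp only [TensorProduct.map_tmul, conj, LinearMap.coe_comp, Function.comp_apply,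
      LinearMap.mulLeft_apply, LinearMap.mulRight_apply,
      Algebra.TensorProduct.tmul_mul_tmul]
    rw [mul_assoc, mul_assoc]
  | add u v hu hv => simp only [map_add, mul_add, add_mul, hu, hv]

/-! ### computations of vx, vxinv -/

lemma VX1 (w : B ⊗[k] B) (p' q' : B) :
    mul2 k B (TensorProduct.map W.S LinearMap.id (w * (p' ⊗ₜ[k] q')))
      = W.S p' * mul2 k B (TensorProduct.map W.S LinearMap.id w) * q' := by
  induction w using TensorProduct.induction_on with
  | zero => simp
  | tmul c d =>
    rw [Algebra.TensorProduct.tmul_mul_tmul]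
    simp only [TensorProduct.map_tmul, LinearMap.id_coe, id_eq, mul2_tmul]
    rw [AM, mul_assoc, mul_assoc, mul_assoc]
  | add u v hu hv =>
    rw [add_mul, map_add, map_add, map_add, map_add, hu, hv, mul_add, add_mul]

lemma VX2 {xi : B} (hxi : W.εs xi = 1) (u : B ⊗[k] B) :
    mul2 k B (TensorProduct.map W.S LinearMap.id (W.Δ xi * u))
      = mul2 k B (TensorProduct.map W.S LinearMap.id u) := by
  induction u using TensorProduct.induction_on with
  | zero => simp
  | tmul p q =>
    rw [VX1, F2, hxi, mul_one]
    simp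
  | add u v hu hv =>
    rw [mul_add, map_add, map_add, map_add, map_add, hu, hv]

lemma VXi1 (w : B ⊗[k] B) (p' q' : B) :
    mul2 k B (TensorProduct.map LinearMap.id W.S ((p' ⊗ₜ[k] q') * w))
      = p' * mul2 k B (TensorProduct.map LinearMap.id W.S w) * W.S q' := by
  induction w using TensorProduct.induction_on with
  | zero => simp
  | tmul c d =>
    rw [Algebra.TensorProduct.tmul_mul_tmul]
    simp only [TensorProduct.map_tmul, LinearMap.id_coe, id_eq, mul2_tmul]
    rw [AM, ← mul_assoc, ← mul_assoc]
  | add u v hu hv =>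
    rw [mul_add, map_add, map_add, map_add, map_add, hu, hv, mul_add, add_mul]

lemma VXi2 {x : B} (hx : W.εt x = 1) (u : B ⊗[k] B) :
    mul2 k B (TensorProduct.map LinearMap.id W.S (u * W.Δ x))
      = mul2 k B (TensorProduct.map LinearMap.id W.S u) := by
  induction u using TensorProduct.induction_on with
  | zero => simp
  | tmul p q =>
    rw [VXi1, F1, hx, mul_one]
    simp
  | add u v hu hv =>
    rw [add_mul, map_add, map_add, map_add, map_add, hu, hv]

end WHA
open WHA in
/-- a gauge transformation `x` (invertible, with `ε_t(x) = ε_s(x) = 1`)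
turns a twist `(Θ, Θ̄)` into a twist `(Θˣ, Θ̄ˣ)`, and `h ↦ x⁻¹hx` is an isomorphism
of weak Hopf algebras `H_Θ → H_{Θˣ}`. -/
theorem gauge_equivalence
    (k B : Type*) [Field k] [Ring B] [Algebra k B]
    (W : WHA.WeakHopf k B) (T : WHA.Twist k B W)
    (x xi : B) (hx₁ : x * xi = 1) (hx₂ : xi * x = 1)
    (hεt : W.εt x = 1) (hεs : W.εs x = 1)
    (Θx Θbx : B ⊗[k] B)
    (hΘx : Θx = W.Δ xi * T.Θ * (x ⊗ₜ[k] x))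
    (hΘbx : Θbx = (xi ⊗ₜ[k] xi) * T.Θbar * W.Δ x)
    (v vinv vx vxinv : B)
    (hv : v = WHA.mul2 k B (TensorProduct.map W.S LinearMap.id T.Θ))
    (hvinv : vinv = WHA.mul2 k B (TensorProduct.map LinearMap.id W.S T.Θbar))
    (hvx : vx = WHA.mul2 k B (TensorProduct.map W.S LinearMap.id Θx))
    (hvxinv : vxinv = WHA.mul2 k B (TensorProduct.map LinearMap.id W.S Θbx)) :
    (∃ T' : WHA.Twist k B W, T'.Θ = Θx ∧ T'.Θbar = Θbx) ∧
    Function.Bijective (fun h : B => xi * h * x) ∧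
    (∀ a b : B, xi * (a * b) * x = (xi * a * x) * (xi * b * x)) ∧
    (∀ h : B,
      TensorProduct.map (WHA.conj k xi x) (WHA.conj k xi x) (T.Θbar * W.Δ h * T.Θ)
        = Θbx * W.Δ (xi * h * x) * Θx) ∧
    (∀ h : B, W.ε (xi * h * x) = W.ε h) ∧
    (∀ h : B, xi * (vinv * W.S h * v) * x = vxinv * W.S (xi * h * x) * vx) := by
  -- Basic counital facts for xi
  have hεs_xi : W.εs xi = 1 := by
    have h1 : W.εs (x * xi) = W.εs xi := by rw [L3a, hεs, one_mul]
    rw [hx₁, εs_one] at h1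
    exact h1.symm
  have hΔ1xix : W.Δ xi * W.Δ x = W.Δ 1 := by rw [← W.comul_mul, hx₂]
  have hΔ1xxi : W.Δ x * W.Δ xi = W.Δ 1 := by rw [← W.comul_mul, hx₁]
  have hxx_xixi : (x ⊗ₜ[k] x) * (xi ⊗ₜ[k] xi) = (1 : B ⊗[k] B) := by
    rw [Algebra.TensorProduct.tmul_mul_tmul, hx₁]
    exact one2.symm
  -- passing lemmas for leg commutation
  have pass3 : ∀ (c : B) (u : B ⊗[k] B) (t : B ⊗[k] (B ⊗[k] B)),
      ((1:B) ⊗ₜ[k] ((1:B) ⊗ₜ[k] c)) * (WHA.leg12 k B u * t)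
        = WHA.leg12 k B u * (((1:B) ⊗ₜ[k] ((1:B) ⊗ₜ[k] c)) * t) := by
    intro c u t
    rw [← mul_assoc, pi3_comm, mul_assoc]
  have pass1 : ∀ (c : B) (u : B ⊗[k] B) (t : B ⊗[k] (B ⊗[k] B)),
      (c ⊗ₜ[k] (1 : B ⊗[k] B)) * (WHA.leg23 k B u * t)
        = WHA.leg23 k B u * ((c ⊗ₜ[k] (1 : B ⊗[k] B)) * t) := by
    intro c u t
    rw [← mul_assoc, pi1_comm, mul_assoc]
  have fold12 : ∀ (u w : B ⊗[k] B) (t : B ⊗[k] (B ⊗[k] B)),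
      WHA.leg12 k B u * (WHA.leg12 k B w * t) = WHA.leg12 k B (u * w) * t := by
    intro u w t; rw [← mul_assoc, ← leg12_mul]
  have fold23 : ∀ (u w : B ⊗[k] B) (t : B ⊗[k] (B ⊗[k] B)),
      WHA.leg23 k B u * (WHA.leg23 k B w * t) = WHA.leg23 k B (u * w) * t := by
    intro u w t; rw [← mul_assoc, ← leg23_mul]
  have foldA : ∀ (u w : B ⊗[k] B) (t : B ⊗[k] (B ⊗[k] B)),
      WHA.ext12 k B W.Δ u * (WHA.ext12 k B W.Δ w * t)
        = WHA.ext12 k B W.Δ (u * w) * t := by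
    intro u w t; rw [← mul_assoc, ← ext12_mul]
  have foldA' : ∀ (u w : B ⊗[k] B) (t : B ⊗[k] (B ⊗[k] B)),
      WHA.ext23 k B W.Δ u * (WHA.ext23 k B W.Δ w * t)
        = WHA.ext23 k B W.Δ (u * w) * t := by
    intro u w t; rw [← mul_assoc, ← ext23_mul]
  refine ⟨⟨⟨Θx, Θbx, ?_, ?_, ?_, ?_, ?_, ?_, ?_, ?_, ?_, ?_, ?_⟩, rfl, rfl⟩,
    ?_, ?_, ?_, ?_, ?_⟩
  · -- idem_left
    rw [hΘx, ← mul_assoc, ← mul_assoc, e_mul_delta]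
  · -- idem_right
    rw [hΘbx]
    conv_rhs => rw [mul_assoc, delta_mul_e]
  · -- prod_eq
    rw [hΘx, hΘbx]
    simp only [mul_assoc]
    rw [← mul_assoc (x ⊗ₜ[k] x) (xi ⊗ₜ[k] xi), hxx_xixi, one_mul,
      ← mul_assoc T.Θ, T.prod_eq, e_mul_delta, hΔ1xix]
  · -- counit₁
    rw [hΘx, epsL_strip_xx W hεt, ← insert_εs_fst, L4a, mul_assoc, ← T.idem_left,
      epsL_oneMul, T.counit₁, mul_one, hx₂]
  · -- counit₂
    rw [hΘx, epsR_strip_xx W hεt, ← insert_εo_snd, L4o, mul_assoc, ← T.idem_left,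
      epsR_oneMul', T.counit₂, mul_one, hx₂]
  · -- counit₃
    rw [hΘbx, mul_assoc, epsL_strip_xixi W hεs_xi, ← insert_εoo_fst, L4oo,
      ← mul_assoc, ← T.idem_right, ← epsL_mulRight, T.counit₃, one_mul, hx₂]
  · -- counit₄
    rw [hΘbx, mul_assoc, epsR_strip_xixi W hεs_xi, ← insert_εt_snd, L4b,
      ← mul_assoc, ← T.idem_right, epsR_mulOne, T.counit₄, one_mul, hx₂]
  · -- cocycle₁
    rw [hΘx, ext12_mul, ext12_mul, leg12_mul, leg12_mul, ext23_mul, ext23_mul,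
      leg23_mul, leg23_mul, esplit12 W x x, esplit23 W x x]
    simp only [mul_assoc]
    rw [pass3, pass3]
    have h3x : ((1:B) ⊗ₜ[k] ((1:B) ⊗ₜ[k] x)) * WHA.leg12 k B (x ⊗ₜ[k] x)
        = x ⊗ₜ[k] (x ⊗ₜ[k] x) := by
      simp [Algebra.TensorProduct.tmul_mul_tmul]
    rw [h3x, fold12, hΔ1xxi, fold12, ← T.idem_left]
    rw [pass1, pass1, pass1]
    have h1x : (x ⊗ₜ[k] (1 : B ⊗[k] B)) * WHA.leg23 k B (x ⊗ₜ[k] x)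
        = x ⊗ₜ[k] (x ⊗ₜ[k] x) := by
      simp [Algebra.TensorProduct.tmul_mul_tmul]
    rw [h1x, fold23, hΔ1xxi, fold23, ← T.idem_left]
    rw [W.coassoc xi, ← mul_assoc (WHA.ext12 k B W.Δ T.Θ), T.cocycle₁, mul_assoc]
  · -- cocycle₂
    rw [hΘbx]
    simp only [leg12_mul, leg23_mul, ext12_mul, ext23_mul]
    rw [esplit12 W xi xi, esplit23 W xi xi]
    simp only [mul_assoc]
    rw [fold12 (W.Δ x) (W.Δ xi), hΔ1xxi, fold12 T.Θbar (W.Δ 1), ← T.idem_right,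
      ← pass3 xi T.Θbar]
    rw [← mul_assoc (WHA.leg12 k B (xi ⊗ₜ[k] xi))]
    have hXi3 : WHA.leg12 k B (xi ⊗ₜ[k] xi) * ((1:B) ⊗ₜ[k] ((1:B) ⊗ₜ[k] xi))
        = xi ⊗ₜ[k] (xi ⊗ₜ[k] xi) := by
      simp [Algebra.TensorProduct.tmul_mul_tmul]
    rw [hXi3, ← pass1 xi (W.Δ x), ← pass1 xi T.Θbar]
    rw [← mul_assoc (WHA.leg23 k B (xi ⊗ₜ[k] xi))]
    have hXi3' : WHA.leg23 k B (xi ⊗ₜ[k] xi) * (xi ⊗ₜ[k] (1 : B ⊗[k] B))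
        = xi ⊗ₜ[k] (xi ⊗ₜ[k] xi) := by
      simp [Algebra.TensorProduct.tmul_mul_tmul]
    rw [hXi3', fold23 (W.Δ x) (W.Δ xi), hΔ1xxi, fold23 T.Θbar (W.Δ 1),
      ← T.idem_right]
    rw [W.coassoc x, ← mul_assoc (WHA.leg12 k B T.Θbar), T.cocycle₂, mul_assoc]
  · -- cocycle₃
    rw [hΘbx, hΘx]
    simp only [leg12_mul, leg23_mul, ext12_mul, ext23_mul]
    rw [esplit12 W xi xi, esplit23 W x x]
    simp only [mul_assoc]
    rw [← W.coassoc xi, foldA (W.Δ x) (W.Δ xi), hΔ1xxi, foldA T.Θbar (W.Δ 1),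
      ← T.idem_right]
    rw [← mul_assoc (WHA.ext12 k B W.Δ T.Θbar), T.cocycle₃, mul_assoc]
    rw [pass3 xi T.Θ, ← pass1 x T.Θbar]
    rw [← mul_assoc ((1:B) ⊗ₜ[k] ((1:B) ⊗ₜ[k] xi))]
    have hP31 : ((1:B) ⊗ₜ[k] ((1:B) ⊗ₜ[k] xi)) * (x ⊗ₜ[k] (1 : B ⊗[k] B))
        = x ⊗ₜ[k] ((1:B) ⊗ₜ[k] xi) := by
      simp [Algebra.TensorProduct.tmul_mul_tmul]
    rw [hP31]
    rw [← mul_assoc (WHA.leg12 k B (x ⊗ₜ[k] x))]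
    have hXX : WHA.leg12 k B (x ⊗ₜ[k] x) * WHA.leg23 k B (xi ⊗ₜ[k] xi)
        = x ⊗ₜ[k] ((1:B) ⊗ₜ[k] xi) := by
      simp [Algebra.TensorProduct.tmul_mul_tmul, hx₁]
    rw [hXX]
  · -- cocycle₄
    rw [hΘbx, hΘx]
    simp only [leg12_mul, leg23_mul, ext12_mul, ext23_mul]
    rw [esplit23 W xi xi, esplit12 W x x]
    simp only [mul_assoc]
    rw [W.coassoc xi, foldA' (W.Δ x) (W.Δ xi), hΔ1xxi, foldA' T.Θbar (W.Δ 1),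
      ← T.idem_right]
    rw [← mul_assoc (WHA.ext23 k B W.Δ T.Θbar), T.cocycle₄, mul_assoc]
    rw [← pi3_comm x (W.Δ x), ← pass3 x T.Θbar]
    rw [pass1 xi (W.Δ xi), pass1 xi T.Θ]
    rw [← mul_assoc (xi ⊗ₜ[k] (1 : B ⊗[k] B))]
    have hP13 : (xi ⊗ₜ[k] (1 : B ⊗[k] B)) * ((1:B) ⊗ₜ[k] ((1:B) ⊗ₜ[k] x))
        = xi ⊗ₜ[k] ((1:B) ⊗ₜ[k] x) := by
      simp [Algebra.TensorProduct.tmul_mul_tmul]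
    rw [hP13]
    rw [← mul_assoc (WHA.leg23 k B (x ⊗ₜ[k] x))]
    have hXX : WHA.leg23 k B (x ⊗ₜ[k] x) * WHA.leg12 k B (xi ⊗ₜ[k] xi)
        = xi ⊗ₜ[k] ((1:B) ⊗ₜ[k] x) := by
      simp [Algebra.TensorProduct.tmul_mul_tmul, hx₁]
    rw [hXX]
  · -- bijective
    apply Function.bijective_iff_has_inverse.mpr
    refine ⟨fun h => x * h * xi, ?_, ?_⟩
    · intro h
      simp only
      rw [← mul_assoc, ← mul_assoc, hx₁, one_mul, mul_assoc, hx₁, mul_one]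
    · intro h
      simp only
      rw [← mul_assoc, ← mul_assoc, hx₂, one_mul, mul_assoc, hx₂, mul_one]
  · -- multiplicative
    intro a b
    have h1 : x * (xi * (b * x)) = b * x := by
      rw [← mul_assoc, ← mul_assoc, hx₁, one_mul]
    calc xi * (a * b) * x
        = xi * (a * (b * x)) := by simp only [mul_assoc]
      _ = xi * (a * (x * (xi * (b * x)))) := by rw [h1]
      _ = (xi * a * x) * (xi * b * x) := by simp only [mul_assoc]
  · -- comultiplication intertwined
    intro h
    rw [conj_map, hΘx, hΘbx, W.comul_mul (xi*h) x, W.comul_mul xi h]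
    simp only [mul_assoc]
    rw [← mul_assoc (W.Δ x) (W.Δ xi), hΔ1xxi, ← mul_assoc (W.Δ 1), e_mul_delta,
      ← mul_assoc (W.Δ x) (W.Δ xi), hΔ1xxi, ← mul_assoc (W.Δ 1), ← T.idem_left]
  · -- counit intertwined
    intro h
    rw [εB1 W hεt, εB2 W hεs_xi]
  · -- antipode intertwined
    intro h
    have hvx' : vx = W.S x * v * x := by
      rw [hvx, hΘx, VX1, VX2 W hεs_xi, ← hv]
    have hvxinv' : vxinv = xi * vinv * W.S xi := by
      rw [hvxinv, hΘbx, mul_assoc, VXi1, VXi2 W hεt, ← hvinv]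
    have hSxix : W.S xi * W.S x = 1 := by rw [← AM W x xi, hx₁, S_one]
    have hSconj : W.S (xi * h * x) = W.S x * (W.S h * W.S xi) := by
      rw [AM W (xi*h) x, AM W xi h]
    have hc1 : ∀ t : B, W.S xi * (W.S x * t) = t := by
      intro t; rw [← mul_assoc, hSxix, one_mul]
    rw [hvxinv', hSconj, hvx']
    simp only [mul_assoc]
    rw [hc1, hc1]
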